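/- arXiv:1807.02825 — 8 statements merged into one kernel-verified Lean document; each statement's English description precedes it below -/
import Mathlib

section
/- Let B = [b_{ij}] be an n×n real matrix with b_{ij} ≤ 0 for all i ≠ j. Then B is a non-singular M-matrix if and only if there exist vectors η = (η_1,…,η_n) and q = (q_1,…,q_n) with η_i > 0 and q_i > 0 for all i, such that Σ_{j=1}^n (η_i b_{ij} q_j + η_j b_{ji} q_i) > 0 for every i = 1,…,n. -/
open MeasureTheory Filter Topology

noncomputable section

/-- A P-matrix: all principal minors are positive. -/
def IsPMatrix {m : ℕ} (B : Matrix (Fin m) (Fin m) ℝ) : Prop :=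
  ∀ S : Finset (Fin m), S.Nonempty →
    0 < (B.submatrix (fun i : {y // y ∈ S} => (i : Fin m))
          (fun j : {y // y ∈ S} => (j : Fin m))).det

/-- A non-singular M-matrix: nonpositive off-diagonal entries and all principal
minors positive. -/
def IsNonsingularMMatrix {m : ℕ} (B : Matrix (Fin m) (Fin m) ℝ) : Prop :=
  (∀ i j, i ≠ j → B i j ≤ 0) ∧ IsPMatrix B


lemma det_pos_of_quadform {ι : Type*} [Fintype ι] [DecidableEq ι]
    (A : Matrix ι ι ℝ)
    (h : ∀ y : ι → ℝ, y ≠ 0 → 0 < ∑ i, ∑ j, y i * A i j * y j) :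
    0 < A.det := by
  set f : ℝ → ℝ := fun t => ((1 - t) • (1 : Matrix ι ι ℝ) + t • A).det with hf
  have hcont : Continuous f := by
    apply Continuous.matrix_det
    fun_prop
  have hne : ∀ t ∈ Set.Icc (0:ℝ) 1, f t ≠ 0 := by
    rintro t ⟨ht0, ht1⟩ h0
    obtain ⟨y, hy, hmul⟩ := (Matrix.exists_mulVec_eq_zero_iff).2 h0
    have key : ∑ i, y i * (((1 - t) • (1 : Matrix ι ι ℝ) + t • A).mulVec y) i = 0 := by
      simp [hmul]
    have expand : ∑ i, y i * (((1 - t) • (1 : Matrix ι ι ℝ) + t • A).mulVec y) i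
        = (1 - t) * ∑ i, y i ^ 2 + t * ∑ i, ∑ j, y i * A i j * y j := by
      rw [Matrix.add_mulVec, Matrix.smul_mulVec, Matrix.smul_mulVec,
        Matrix.one_mulVec]
      simp only [Pi.add_apply, Pi.smul_apply, smul_eq_mul, Matrix.mulVec, dotProduct]
      rw [Finset.mul_sum, Finset.mul_sum, ← Finset.sum_add_distrib]
      refine Finset.sum_congr rfl fun i _ => ?_
      have hmulsum : y i * ∑ j, A i j * y j = ∑ j, y i * A i j * y j := by
        rw [Finset.mul_sum]
        exact Finset.sum_congr rfl fun j _ => (mul_assoc _ _ _).symm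
      rw [← hmulsum]
      ring
    have hsq : 0 < ∑ i, y i ^ 2 := by
      obtain ⟨i, hi⟩ := Function.ne_iff.1 hy
      refine Finset.sum_pos' (fun j _ => sq_nonneg _) ⟨i, Finset.mem_univ i, ?_⟩
      have : y i ≠ 0 := hi
      positivity
    have hQ := h y hy
    rw [key] at expand
    have h1 : 0 ≤ (1 - t) * ∑ i, y i ^ 2 := mul_nonneg (by linarith) hsq.le
    have h2 : 0 ≤ t * ∑ i, ∑ j, y i * A i j * y j := mul_nonneg ht0 hQ.le
    have hb : t * ∑ i, ∑ j, y i * A i j * y j = 0 := by linarith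
    have ha : (1 - t) * ∑ i, y i ^ 2 = 0 := by linarith
    have ht' : t = 0 := by
      rcases mul_eq_zero.1 hb with h' | h'
      · exact h'
      · exact absurd h' hQ.ne'
    have ht'' : 1 - t = 0 := by
      rcases mul_eq_zero.1 ha with h' | h'
      · exact h'
      · exact absurd h' hsq.ne'
    linarith
  have hf0 : f 0 = 1 := by simp [hf]
  have hf1 : f 1 = A.det := by simp [hf]
  by_contra hle
  push_neg at hle
  have h1ne : f 1 ≠ 0 := hne 1 ⟨zero_le_one, le_refl 1⟩
  have hflt : f 1 < 0 := lt_of_le_of_ne (hf1 ▸ hle) h1ne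
  have hiv := intermediate_value_Icc' (zero_le_one (α := ℝ)) hcont.continuousOn
  have h0mem : (0:ℝ) ∈ Set.Icc (f 1) (f 0) := ⟨le_of_lt hflt, by rw [hf0]; norm_num⟩
  obtain ⟨t, ht, hft⟩ := hiv h0mem
  exact hne t ht hft



lemma det_pos_of_symm_dom {ι : Type*} [Fintype ι] [DecidableEq ι]
    (C : Matrix ι ι ℝ) (η q : ι → ℝ) (hη : ∀ i, 0 < η i) (hq : ∀ i, 0 < q i)
    (hoff : ∀ i j, i ≠ j → C i j ≤ 0)
    (hsum : ∀ i, 0 < ∑ j, (η i * C i j * q j + η j * C j i * q i)) :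
    0 < C.det := by
  set M : Matrix ι ι ℝ := Matrix.of fun i j => η i * C i j * q j + η j * C j i * q i with hM
  have hMsymm : ∀ i j, M i j = M j i := by intro i j; simp [hM]; ring
  have hMoff : ∀ i j, i ≠ j → M i j ≤ 0 := by
    intro i j hij
    have h1 : η i * C i j * q j ≤ 0 :=
      mul_nonpos_of_nonpos_of_nonneg
        (mul_nonpos_of_nonneg_of_nonpos (hη i).le (hoff i j hij)) (hq j).le
    have h2 : η j * C j i * q i ≤ 0 :=
      mul_nonpos_of_nonpos_of_nonneg
        (mul_nonpos_of_nonneg_of_nonpos (hη j).le (hoff j i (Ne.symm hij))) (hq i).le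
    simpa [hM] using add_nonpos h1 h2
  set C' : Matrix ι ι ℝ := Matrix.of fun i j => η i * C i j * q j with hC'
  have hquad : ∀ y : ι → ℝ, y ≠ 0 → 0 < ∑ i, ∑ j, y i * C' i j * y j := by
    intro y hy
    set R : ℝ := ∑ i, (∑ j, M i j) * y i ^ 2 with hR
    set S : ℝ := ∑ i, ∑ j, M i j * (y i - y j) ^ 2 with hS
    set T : ℝ := ∑ i, ∑ j, M i j * (y i * y j) with hT
    -- S = 2R - 2T
    have hST : S = 2 * R - 2 * T := by
      have expand : ∀ i j, M i j * (y i - y j) ^ 2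
          = M i j * y i ^ 2 + M i j * y j ^ 2 - 2 * (M i j * (y i * y j)) := by
        intro i j; ring
      have e1 : S = (∑ i, ∑ j, M i j * y i ^ 2) + (∑ i, ∑ j, M i j * y j ^ 2)
          - 2 * ∑ i, ∑ j, M i j * (y i * y j) := by
        rw [hS]
        rw [Finset.mul_sum, ← Finset.sum_add_distrib, ← Finset.sum_sub_distrib]
        refine Finset.sum_congr rfl fun i _ => ?_
        rw [Finset.mul_sum, ← Finset.sum_add_distrib, ← Finset.sum_sub_distrib]
        exact Finset.sum_congr rfl fun j _ => expand i j
      have e2 : (∑ i, ∑ j, M i j * y i ^ 2) = R := by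
        rw [hR]
        exact Finset.sum_congr rfl fun i _ => by rw [Finset.sum_mul]
      have e3 : (∑ i, ∑ j, M i j * y j ^ 2) = R := by
        rw [Finset.sum_comm, hR]
        refine Finset.sum_congr rfl fun j _ => ?_
        rw [Finset.sum_mul]
        exact Finset.sum_congr rfl fun i _ => by rw [hMsymm j i]
      rw [e1, e2, e3, ← hT]; ring
    -- T = 2 * quadform
    have hTQ : T = 2 * ∑ i, ∑ j, y i * C' i j * y j := by
      have : T = (∑ i, ∑ j, η i * C i j * q j * (y i * y j))
          + ∑ i, ∑ j, η j * C j i * q i * (y i * y j) := by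
        rw [hT, ← Finset.sum_add_distrib]
        refine Finset.sum_congr rfl fun i _ => ?_
        rw [← Finset.sum_add_distrib]
        refine Finset.sum_congr rfl fun j _ => ?_
        simp [hM]; ring
      rw [this]
      have swap : (∑ i, ∑ j, η j * C j i * q i * (y i * y j))
          = ∑ i, ∑ j, η i * C i j * q j * (y i * y j) := by
        rw [Finset.sum_comm]
        refine Finset.sum_congr rfl fun i _ => Finset.sum_congr rfl fun j _ => by ring
      rw [swap, two_mul]
      congr 1 <;>
        exact Finset.sum_congr rfl fun i _ => Finset.sum_congr rfl fun j _ => by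
          simp [hC']; ring
    have hSle : S ≤ 0 := by
      rw [hS]
      refine Finset.sum_nonpos fun i _ => Finset.sum_nonpos fun j _ => ?_
      rcases eq_or_ne i j with rfl | hij
      · simp
      · exact mul_nonpos_of_nonpos_of_nonneg (hMoff i j hij) (sq_nonneg _)
    have hRpos : 0 < R := by
      obtain ⟨i, hi⟩ := Function.ne_iff.1 hy
      refine Finset.sum_pos' (fun j _ => mul_nonneg ?_ (sq_nonneg _)) ⟨i, Finset.mem_univ i, ?_⟩
      · exact le_of_lt (by simpa [hM] using hsum j)
      · have h1 : (0:ℝ) < ∑ j, M i j := by simpa [hM] using hsum i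
        have h2 : (0:ℝ) < y i ^ 2 := by
          have : y i ≠ 0 := hi
          positivity
        exact mul_pos h1 h2
    linarith
  have hdet' := det_pos_of_quadform C' hquad
  have hfact : C' = Matrix.diagonal η * C * Matrix.diagonal q := by
    ext i j
    simp [hC', Matrix.diagonal_mul, Matrix.mul_diagonal, mul_assoc]
  have hdet2 : C'.det = (∏ i, η i) * C.det * ∏ i, q i := by
    rw [hfact, Matrix.det_mul, Matrix.det_mul, Matrix.det_diagonal, Matrix.det_diagonal]
  have hpη : 0 < ∏ i, η i := Finset.prod_pos fun i _ => hη i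
  have hpq : 0 < ∏ i, q i := Finset.prod_pos fun i _ => hq i
  by_contra hle
  push_neg at hle
  have hle2 : C'.det ≤ 0 := by
    rw [hdet2]
    exact mul_nonpos_of_nonpos_of_nonneg
      (mul_nonpos_of_nonneg_of_nonpos hpη.le hle) hpq.le
  linarith



lemma semipos : ∀ (n : ℕ) (B : Matrix (Fin n) (Fin n) ℝ),
    (∀ i j, i ≠ j → B i j ≤ 0) → IsPMatrix B →
    ∃ q : Fin n → ℝ, (∀ i, 0 < q i) ∧ ∀ i, 0 < B.mulVec q i := by
  intro n
  induction n with
  | zero =>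
    intro B _ _
    exact ⟨fun _ => 1, fun i => i.elim0, fun i => i.elim0⟩
  | succ n ih =>
    intro B hoff hP
    set l := Fin.last n with hl
    have hβ : 0 < B l l := by
      have h1 := hP {l} ⟨l, Finset.mem_singleton_self _⟩
      haveI : Unique {y // y ∈ ({l} : Finset (Fin (n+1)))} :=
        ⟨⟨⟨l, Finset.mem_singleton_self _⟩⟩, by
          rintro ⟨x, hx⟩
          simp only [Finset.mem_singleton] at hx
          exact Subtype.ext hx⟩
      rw [Matrix.det_unique, Matrix.submatrix_apply] at h1
      have hd := Finset.mem_singleton.1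
        (Subtype.prop (default : {y // y ∈ ({l} : Finset (Fin (n+1)))}))
      rwa [hd] at h1
    have hβne : B l l ≠ 0 := ne_of_gt hβ
    have hcs_ne_l : ∀ i : Fin n, i.castSucc ≠ l := fun i => (Fin.castSucc_lt_last i).ne
    set A' : Matrix (Fin n) (Fin n) ℝ :=
      Matrix.of fun i j => B i.castSucc j.castSucc - B i.castSucc l * B l j.castSucc / B l l
      with hA'
    have hoffA' : ∀ i j, i ≠ j → A' i j ≤ 0 := by
      intro i j hij
      have h1 : B i.castSucc j.castSucc ≤ 0 :=
        hoff _ _ (by simpa [Fin.castSucc_inj] using hij)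
      have h2 : 0 ≤ B i.castSucc l * B l j.castSucc := by
        nlinarith [hoff _ _ (hcs_ne_l i), hoff _ _ (Ne.symm (hcs_ne_l j))]
      have h3 : 0 ≤ B i.castSucc l * B l j.castSucc / B l l := div_nonneg h2 hβ.le
      simp only [hA', Matrix.of_apply]
      linarith
    have hPA' : IsPMatrix A' := by
      intro S hS
      set emb : Fin n ↪ Fin (n+1) := ⟨Fin.castSucc, Fin.castSucc_injective n⟩ with hemb
      set S' : Finset (Fin (n+1)) := insert l (S.map emb) with hS'def
      have hmemlast : l ∈ S' := Finset.mem_insert_self _ _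
      have hdet := hP S' ⟨l, hmemlast⟩
      have memcs : ∀ x : {y // y ∈ S}, (x : Fin n).castSucc ∈ S' := fun x =>
        Finset.mem_insert_of_mem (Finset.mem_map_of_mem emb x.2)
      set g : {y // y ∈ S} ⊕ Unit → {y // y ∈ S'} :=
        Sum.elim (fun x => ⟨(x : Fin n).castSucc, memcs x⟩) (fun _ => ⟨l, hmemlast⟩)
        with hg
      have hgbij : Function.Bijective g := by
        constructor
        · rintro (x | x) (z | z) hxz
          · have h' : ((x : Fin n).castSucc) = ((z : Fin n).castSucc) :=
              congrArg Subtype.val hxz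
            exact congrArg Sum.inl (Subtype.ext (Fin.castSucc_injective n h'))
          · exact absurd (congrArg Subtype.val hxz) (hcs_ne_l _)
          · exact absurd (congrArg Subtype.val hxz).symm (hcs_ne_l _)
          · cases x; cases z; rfl
        · rintro ⟨y, hy⟩
          rcases Finset.mem_insert.1 hy with rfl | hy'
          · exact ⟨Sum.inr ⟨⟩, rfl⟩
          · obtain ⟨x, hx, rfl⟩ := Finset.mem_map.1 hy'
            exact ⟨Sum.inl ⟨x, hx⟩, rfl⟩
      set e := Equiv.ofBijective g hgbij with he
      set MS := B.submatrix (fun i : {y // y ∈ S'} => (i : Fin (n+1)))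
          (fun j : {y // y ∈ S'} => (j : Fin (n+1))) with hMS
      set D : Matrix Unit Unit ℝ := Matrix.of fun _ _ => B l l with hD
      haveI hinv : Invertible D :=
        ⟨Matrix.of fun _ _ => (B l l)⁻¹,
          by ext i j; simp [hD, Matrix.mul_apply, Matrix.one_apply, inv_mul_cancel₀ hβne,
            Subsingleton.elim i j],
          by ext i j; simp [hD, Matrix.mul_apply, Matrix.one_apply, mul_inv_cancel₀ hβne,
            Subsingleton.elim i j]⟩
      have hre : MS.submatrix e e = Matrix.fromBlocks
          (B.submatrix (fun i : {y // y ∈ S} => (i : Fin n).castSucc)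
            (fun j : {y // y ∈ S} => (j : Fin n).castSucc))
          (Matrix.of fun (i : {y // y ∈ S}) (_ : Unit) => B (i : Fin n).castSucc l)
          (Matrix.of fun (_ : Unit) (j : {y // y ∈ S}) => B l (j : Fin n).castSucc)
          D := by
        ext i j
        cases i <;> cases j <;> rfl
      have hdet1 : MS.det = (MS.submatrix e e).det :=
        (Matrix.det_submatrix_equiv_self e MS).symm
      rw [hre, Matrix.det_fromBlocks₂₂] at hdet1
      have hinvOf : (⅟D : Matrix Unit Unit ℝ) = Matrix.of fun _ _ => (B l l)⁻¹ :=
        invOf_eq_right_inv (by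
          ext i j
          simp [hD, Matrix.mul_apply, Matrix.one_apply, mul_inv_cancel₀ hβne,
            Subsingleton.elim i j])
      have hAS : (B.submatrix (fun i : {y // y ∈ S} => (i : Fin n).castSucc)
            (fun j : {y // y ∈ S} => (j : Fin n).castSucc)
          - (Matrix.of fun (i : {y // y ∈ S}) (_ : Unit) => B (i : Fin n).castSucc l)
            * (⅟D) * (Matrix.of fun (_ : Unit) (j : {y // y ∈ S}) => B l (j : Fin n).castSucc))
          = A'.submatrix (fun i : {y // y ∈ S} => (i : Fin n))
            (fun j : {y // y ∈ S} => (j : Fin n)) := by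
        ext i j
        rw [hinvOf]
        simp only [Matrix.sub_apply, Matrix.mul_apply, Matrix.submatrix_apply, Matrix.of_apply,
          Finset.univ_unique, Finset.sum_singleton, hA']
        ring
      rw [hAS] at hdet1
      have hdetD : D.det = B l l := by
        rw [Matrix.det_unique]; rfl
      rw [hdetD] at hdet1
      rw [hdet1] at hdet
      nlinarith [hdet, hβ]
    obtain ⟨u, hu, hAu⟩ := ih A' hoffA' hPA'
    -- choose δ
    set F : Finset ℝ :=
      insert 1 (Finset.univ.image fun i : Fin n =>
        A'.mulVec u i / ((-(B i.castSucc l) / B l l) + 1)) with hF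
    have hFne : F.Nonempty := ⟨1, Finset.mem_insert_self _ _⟩
    set δ := F.min' hFne with hδdef
    have hfnonneg : ∀ i : Fin n, 0 ≤ -(B i.castSucc l) / B l l := fun i =>
      div_nonneg (neg_nonneg.2 (hoff _ _ (hcs_ne_l i))) hβ.le
    have hδpos : 0 < δ := by
      have hmem := F.min'_mem hFne
      rw [← hδdef] at hmem
      rcases Finset.mem_insert.1 hmem with h | h
      · rw [h]; norm_num
      · obtain ⟨i, _, hi⟩ := Finset.mem_image.1 h
        rw [← hi]
        exact div_pos (hAu i) (by linarith [hfnonneg i])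
    have hδlt : ∀ i : Fin n, δ * (-(B i.castSucc l) / B l l) < A'.mulVec u i := by
      intro i
      have hle : δ ≤ A'.mulVec u i / ((-(B i.castSucc l) / B l l) + 1) :=
        F.min'_le _ (Finset.mem_insert_of_mem (Finset.mem_image_of_mem _ (Finset.mem_univ i)))
      have hpos1 : 0 < (-(B i.castSucc l) / B l l) + 1 := by linarith [hfnonneg i]
      have h2 : δ * ((-(B i.castSucc l) / B l l) + 1) ≤ A'.mulVec u i := by
        rw [← div_mul_cancel₀ (A'.mulVec u i) hpos1.ne']
        exact mul_le_mul_of_nonneg_right hle hpos1.le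
      nlinarith [hδpos]
    set cu := ∑ j : Fin n, B l j.castSucc * u j with hcu
    have hcunonpos : cu ≤ 0 := Finset.sum_nonpos fun j _ =>
      mul_nonpos_of_nonpos_of_nonneg (hoff _ _ (Ne.symm (hcs_ne_l j))) (hu j).le
    set t := (δ - cu) / B l l with htdef
    have htpos : 0 < t := div_pos (by linarith) hβ
    refine ⟨Fin.snoc u t, ?_, ?_⟩
    · intro i
      refine Fin.lastCases ?_ (fun k => ?_) i
      · rw [Fin.snoc_last]; exact htpos
      · rw [Fin.snoc_castSucc]; exact hu k
    · intro i
      refine Fin.lastCases ?_ (fun k => ?_) i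
      · have hval : B.mulVec (Fin.snoc u t) l = cu + B l l * t := by
          simp only [Matrix.mulVec, dotProduct]
          rw [Fin.sum_univ_castSucc]
          simp only [Fin.snoc_castSucc, Fin.snoc_last]
          rfl
        rw [hval, htdef]
        field_simp
        linarith
      · have hval : B.mulVec (Fin.snoc u t) k.castSucc
            = A'.mulVec u k + B k.castSucc l * δ / B l l := by
          simp only [Matrix.mulVec, dotProduct]
          rw [Fin.sum_univ_castSucc]
          simp only [Fin.snoc_castSucc, Fin.snoc_last]
          simp only [← hl]
          have hexp : ∑ x : Fin n, A' k x * u x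
              = (∑ x : Fin n, B k.castSucc x.castSucc * u x)
                - B k.castSucc l / B l l * cu := by
            rw [hcu, Finset.mul_sum, ← Finset.sum_sub_distrib]
            refine Finset.sum_congr rfl fun j _ => ?_
            simp only [hA', Matrix.of_apply]
            ring
          rw [hexp, htdef]
          field_simp
          ring
        rw [hval]
        have heq : B k.castSucc l * δ / B l l = -(δ * (-(B k.castSucc l) / B l l)) := by
          ring
        linarith [hδlt k, heq]


theorem statement0 (n : ℕ) (B : Matrix (Fin n) (Fin n) ℝ)
    (hoff : ∀ i j, i ≠ j → B i j ≤ 0) :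
    IsNonsingularMMatrix B ↔
      ∃ η q : Fin n → ℝ, (∀ i, 0 < η i) ∧ (∀ i, 0 < q i) ∧
        ∀ i, 0 < ∑ j, (η i * B i j * q j + η j * B j i * q i) := by
  constructor
  · rintro ⟨-, hP⟩
    obtain ⟨q, hq, hBq⟩ := semipos n B hoff hP
    have hoffT : ∀ i j, i ≠ j → B.transpose i j ≤ 0 := fun i j h => hoff j i (Ne.symm h)
    have hPT : IsPMatrix B.transpose := by
      intro S hS
      have h0 := hP S hS
      have heq : (B.transpose.submatrix (fun i : {y // y ∈ S} => (i : Fin n))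
            (fun j : {y // y ∈ S} => (j : Fin n)))
          = (B.submatrix (fun i : {y // y ∈ S} => (i : Fin n))
            (fun j : {y // y ∈ S} => (j : Fin n))).transpose := rfl
      rw [heq, Matrix.det_transpose]
      exact h0
    obtain ⟨η, hη, hBη⟩ := semipos n B.transpose hoffT hPT
    refine ⟨η, q, hη, hq, fun i => ?_⟩
    have hsum : ∑ j, (η i * B i j * q j + η j * B j i * q i)
        = η i * B.mulVec q i + B.transpose.mulVec η i * q i := by
      rw [Finset.sum_add_distrib]
      congr 1
      · simp only [Matrix.mulVec, dotProduct, Finset.mul_sum]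
        exact Finset.sum_congr rfl fun j _ => by ring
      · simp only [Matrix.mulVec, dotProduct, Matrix.transpose_apply, Finset.sum_mul]
        exact Finset.sum_congr rfl fun j _ => by ring
    rw [hsum]
    have h1 := mul_pos (hη i) (hBq i)
    have h2 := mul_pos (hBη i) (hq i)
    linarith
  · rintro ⟨η, q, hη, hq, hs⟩
    refine ⟨hoff, fun S hS => ?_⟩
    refine det_pos_of_symm_dom _ (fun i : {y // y ∈ S} => η i) (fun i => q i)
      (fun i => hη i) (fun i => hq i) (fun i j hij => hoff _ _ ?_) (fun i => ?_)
    · exact fun hval => hij (Subtype.ext hval)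
    · set f : Fin n → ℝ := fun j => η i * B i j * q j + η j * B j i * q i with hf
      have h1 : ∑ j : {y // y ∈ S}, (η (i : Fin n) * B.submatrix
            (fun i : {y // y ∈ S} => (i : Fin n)) (fun j : {y // y ∈ S} => (j : Fin n)) i j
            * q (j : Fin n)
          + η (j : Fin n) * B.submatrix (fun i : {y // y ∈ S} => (i : Fin n))
            (fun j : {y // y ∈ S} => (j : Fin n)) j i * q (i : Fin n))
          = ∑ j ∈ S, f j := by
        rw [← Finset.sum_coe_sort S f]
        exact Finset.sum_congr rfl fun j _ => rfl
      rw [h1]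
      have hsplit := Finset.sum_sdiff (Finset.subset_univ S) (f := f)
      have hneg : ∑ j ∈ Finset.univ \ S, f j ≤ 0 := by
        refine Finset.sum_nonpos fun j hj => ?_
        have hjS : j ∉ S := (Finset.mem_sdiff.1 hj).2
        have hij : (i : Fin n) ≠ j := fun h => hjS (h ▸ i.2)
        exact add_nonpos
          (mul_nonpos_of_nonpos_of_nonneg
            (mul_nonpos_of_nonneg_of_nonpos (hη _).le (hoff _ _ hij)) (hq _).le)
          (mul_nonpos_of_nonpos_of_nonneg
            (mul_nonpos_of_nonneg_of_nonpos (hη _).le (hoff _ _ hij.symm)) (hq _).le)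
      have htot : 0 < ∑ j, f j := hs (i : Fin n)
      linarith

end
end

section
/- Let B = [b_{ij}] be an n×n real matrix with b_{ij} ≤ 0 for all i ≠ j, let r ∈ ℝ^n with r_i ≥ 0 for all i, and suppose there exists η ∈ ℝ^n with η_i > 0 for all i such that Σ_{j=1}^n (η_i b_{ij} + η_j b_{ji}) > 0 for every i = 1,…,n. Then every solution x : [0,∞) → ℝ^n of the ODE system x_i′(t) = −x_i(t)·(r_i + Σ_{j=1}^n b_{ij} x_j(t)), i = 1,…,n, with x_i(t) ≥ 0 for all t ≥ 0 and all i, satisfies x(t) → 0 as t → ∞. -/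
open MeasureTheory Filter Topology

noncomputable section

theorem statement1 (n : ℕ) (B : Matrix (Fin n) (Fin n) ℝ)
    (hoff : ∀ i j, i ≠ j → B i j ≤ 0)
    (r : Fin n → ℝ) (hr : ∀ i, 0 ≤ r i)
    (η : Fin n → ℝ) (hη : ∀ i, 0 < η i)
    (hsym : ∀ i, 0 < ∑ j, (η i * B i j + η j * B j i))
    (x : Fin n → ℝ → ℝ)
    (hxc : ∀ i, ContinuousOn (x i) (Set.Ici 0))
    (hxnn : ∀ i t, (0:ℝ) ≤ t → 0 ≤ x i t)
    (hode : ∀ i t, (0:ℝ) < t → HasDerivAt (x i)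
      (-(x i t) * (r i + ∑ j, B i j * x j t)) t) :
    ∀ i, Filter.Tendsto (x i) Filter.atTop (nhds 0) := by
  intro i0
  haveI : Nonempty (Fin n) := ⟨i0⟩
  set C : Fin n → Fin n → ℝ := fun i j => η i * B i j + η j * B j i with hC
  set ε : Fin n → ℝ := fun i => ∑ j, C i j with hε
  have hεpos : ∀ i, 0 < ε i := fun i => hsym i
  have hCsymm : ∀ i j, C i j = C j i := fun i j => by simp only [hC]; ring
  have hCoff : ∀ i j, i ≠ j → C i j ≤ 0 := by
    intro i j hij
    have h1 : η i * B i j ≤ 0 := mul_nonpos_of_nonneg_of_nonpos (hη i).le (hoff i j hij)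
    have h2 : η j * B j i ≤ 0 := mul_nonpos_of_nonneg_of_nonpos (hη j).le (hoff j i (Ne.symm hij))
    simpa [hC] using add_nonpos h1 h2
  clear_value ε C
  -- quadratic form lower bound: ∑ εᵢ yᵢ² ≤ ∑∑ Cᵢⱼ yᵢ yⱼ
  have quad : ∀ y : Fin n → ℝ, ∑ i, ε i * y i ^ 2 ≤ ∑ i, ∑ j, C i j * y i * y j := by
    intro y
    have swap : (∑ i, ∑ j, C i j * y j ^ 2) = ∑ i, ∑ j, C i j * y i ^ 2 := by
      rw [Finset.sum_comm]
      exact Finset.sum_congr rfl fun i _ => Finset.sum_congr rfl fun j _ => by rw [hCsymm]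
    have lhs_eq : ∑ i, ε i * y i ^ 2 = ∑ i, ∑ j, ((C i j * y i ^ 2 + C i j * y j ^ 2) / 2) := by
      have e1 : ∑ i, ε i * y i ^ 2 = ∑ i, ∑ j, C i j * y i ^ 2 :=
        Finset.sum_congr rfl fun i _ => by simp only [hε]; exact Finset.sum_mul _ _ _
      have e2 : ∑ i, ∑ j, ((C i j * y i ^ 2 + C i j * y j ^ 2) / 2)
          = (∑ i, ∑ j, C i j * y i ^ 2) / 2 + (∑ i, ∑ j, C i j * y j ^ 2) / 2 := by
        simp [add_div, Finset.sum_add_distrib, Finset.sum_div]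
      rw [e1, e2, swap]; ring
    rw [lhs_eq]
    refine Finset.sum_le_sum fun i _ => Finset.sum_le_sum fun j _ => ?_
    rcases eq_or_ne i j with h | h
    · subst h; exact le_of_eq (by ring)
    · have hc := hCoff i j h
      have hp : C i j * (y i - y j) ^ 2 ≤ 0 :=
        mul_nonpos_of_nonpos_of_nonneg hc (sq_nonneg _)
      have key : (C i j * y i ^ 2 + C i j * y j ^ 2) / 2 - C i j * y i * y j
          = C i j * (y i - y j) ^ 2 / 2 := by ring
      linarith [hp, key]
  set K : ℝ := ∑ i, η i ^ 2 / ε i with hK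
  have hKpos : 0 < K :=
    Finset.sum_pos (fun i _ => div_pos (pow_pos (hη i) 2) (hεpos i)) Finset.univ_nonempty
  -- Cauchy–Schwarz
  have hCS : ∀ y : Fin n → ℝ, (∑ i, η i * y i) ^ 2 ≤ K * ∑ i, ε i * y i ^ 2 := by
    intro y
    have h := Finset.sum_mul_sq_le_sq_mul_sq Finset.univ (fun i => η i / Real.sqrt (ε i))
      (fun i => Real.sqrt (ε i) * y i)
    have e1 : ∀ i : Fin n, η i / Real.sqrt (ε i) * (Real.sqrt (ε i) * y i) = η i * y i := by
      intro i
      have hs : Real.sqrt (ε i) ≠ 0 := (Real.sqrt_pos.mpr (hεpos i)).ne'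
      field_simp
    have e2 : ∀ i : Fin n, (η i / Real.sqrt (ε i)) ^ 2 = η i ^ 2 / ε i := by
      intro i; rw [div_pow, Real.sq_sqrt (hεpos i).le]
    have e3 : ∀ i : Fin n, (Real.sqrt (ε i) * y i) ^ 2 = ε i * y i ^ 2 := by
      intro i; rw [mul_pow, Real.sq_sqrt (hεpos i).le]
    calc (∑ i, η i * y i) ^ 2
        = (∑ i, η i / Real.sqrt (ε i) * (Real.sqrt (ε i) * y i)) ^ 2 := by
          rw [Finset.sum_congr rfl fun i _ => (e1 i).symm]
      _ ≤ (∑ i, (η i / Real.sqrt (ε i)) ^ 2) * ∑ i, (Real.sqrt (ε i) * y i) ^ 2 := h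
      _ = K * ∑ i, ε i * y i ^ 2 := by
          rw [Finset.sum_congr rfl fun i _ => e2 i, Finset.sum_congr rfl fun i _ => e3 i]
  set c : ℝ := 1 / (2 * K) with hc
  have hcpos : 0 < c := by positivity
  set V : ℝ → ℝ := fun t => ∑ i, η i * x i t with hVdef
  set D : ℝ → ℝ := fun t => ∑ i, η i * (-(x i t) * (r i + ∑ j, B i j * x j t)) with hDdef
  have hV' : ∀ t : ℝ, 0 < t → HasDerivAt V (D t) t := fun t ht =>
    HasDerivAt.fun_sum fun i _ => (hode i t ht).const_mul (η i)
  have hVc : ContinuousOn V (Set.Ici 0) :=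
    continuousOn_finset_sum _ fun i _ => continuousOn_const.mul (hxc i)
  have hVnn : ∀ t : ℝ, 0 ≤ t → 0 ≤ V t := fun t ht =>
    Finset.sum_nonneg fun i _ => mul_nonneg (hη i).le (hxnn i t ht)
  -- key differential inequality
  have hDle : ∀ t : ℝ, 0 ≤ t → D t ≤ -(c * V t ^ 2) := by
    intro t ht
    set y : Fin n → ℝ := fun i => x i t with hy
    have hynn : ∀ i, 0 ≤ y i := fun i => hxnn i t ht
    have hDeq : D t = -(∑ i, η i * y i * r i) - ∑ i, ∑ j, η i * B i j * y i * y j := by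
      have e0 : ∀ i : Fin n, η i * (-(y i) * (r i + ∑ j, B i j * y j))
          = -(η i * y i * r i) - ∑ j, η i * B i j * y i * y j := by
        intro i
        have e : (∑ j, η i * B i j * y i * y j) = η i * y i * ∑ j, B i j * y j := by
          rw [Finset.mul_sum]
          exact Finset.sum_congr rfl fun j _ => by ring
        rw [e]; ring
      calc D t = ∑ i, (-(η i * y i * r i) - ∑ j, η i * B i j * y i * y j) :=
            Finset.sum_congr rfl fun i _ => e0 i
        _ = -(∑ i, η i * y i * r i) - ∑ i, ∑ j, η i * B i j * y i * y j := by
            rw [Finset.sum_sub_distrib, Finset.sum_neg_distrib]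
    have hswap2 : (∑ i, ∑ j, η j * B j i * y i * y j) = ∑ i, ∑ j, η i * B i j * y i * y j := by
      rw [Finset.sum_comm]
      exact Finset.sum_congr rfl fun i _ => Finset.sum_congr rfl fun j _ => by ring
    have e : (∑ i, ∑ j, C i j * y i * y j) = 2 * ∑ i, ∑ j, η i * B i j * y i * y j := by
      have heach : ∀ i j : Fin n, C i j * y i * y j
          = η i * B i j * y i * y j + η j * B j i * y i * y j := by
        intro i j; simp only [hC]; ring
      calc (∑ i, ∑ j, C i j * y i * y j)
          = ∑ i, ∑ j, (η i * B i j * y i * y j + η j * B j i * y i * y j) :=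
            Finset.sum_congr rfl fun i _ => Finset.sum_congr rfl fun j _ => heach i j
        _ = (∑ i, ∑ j, η i * B i j * y i * y j) + ∑ i, ∑ j, η j * B j i * y i * y j := by
            simp [Finset.sum_add_distrib]
        _ = 2 * ∑ i, ∑ j, η i * B i j * y i * y j := by rw [hswap2]; ring
    have hsum2 : ∑ i, ε i * y i ^ 2 ≤ 2 * ∑ i, ∑ j, η i * B i j * y i * y j := by
      rw [← e]; exact quad y
    have hrsum : 0 ≤ ∑ i, η i * y i * r i :=
      Finset.sum_nonneg fun i _ => mul_nonneg (mul_nonneg (hη i).le (hynn i)) (hr i)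
    have hVt : V t = ∑ i, η i * y i := rfl
    have hQ : c * V t ^ 2 ≤ ∑ i, ∑ j, η i * B i j * y i * y j := by
      have h1 : (V t) ^ 2 ≤ K * ∑ i, ε i * y i ^ 2 := by rw [hVt]; exact hCS y
      have h2 : K * ∑ i, ε i * y i ^ 2 ≤ K * (2 * ∑ i, ∑ j, η i * B i j * y i * y j) :=
        mul_le_mul_of_nonneg_left hsum2 hKpos.le
      have h3 : (V t) ^ 2 ≤ 2 * K * ∑ i, ∑ j, η i * B i j * y i * y j := by nlinarith
      rw [hc]
      rw [div_mul_eq_mul_div, one_mul, div_le_iff₀ (by positivity)]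
      calc V t ^ 2 ≤ 2 * K * ∑ i, ∑ j, η i * B i j * y i * y j := h3
        _ = (∑ i, ∑ j, η i * B i j * y i * y j) * (2 * K) := by ring
    rw [hDeq]
    linarith
  -- V is antitone on [0, ∞)
  have hanti : AntitoneOn V (Set.Ici 0) := by
    apply antitoneOn_of_deriv_nonpos (convex_Ici 0) hVc
    · intro t ht
      rw [interior_Ici] at ht
      exact ((hV' t ht).differentiableAt).differentiableWithinAt
    · intro t ht
      rw [interior_Ici] at ht
      rw [(hV' t ht).deriv]
      have h1 := hDle t ht.le
      have h2 : 0 ≤ c * V t ^ 2 := by positivity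
      linarith
  -- V has a limit L ≥ 0 at infinity
  set g : ℝ → ℝ := fun t => V (max t 0) with hg
  have hganti : Antitone g := fun s t hst =>
    hanti (le_max_right s 0) (le_max_right t 0) (max_le_max hst le_rfl)
  have hgbdd : BddBelow (Set.range g) := by
    refine ⟨0, ?_⟩
    rintro v ⟨t, rfl⟩
    exact hVnn _ (le_max_right t 0)
  set L : ℝ := ⨅ t, g t with hL
  have hgtend : Tendsto g atTop (nhds L) := tendsto_atTop_ciInf hganti hgbdd
  have hVg : g =ᶠ[atTop] V := by
    filter_upwards [eventually_ge_atTop (0:ℝ)] with t ht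
    simp [hg, max_eq_left ht]
  have hVtend : Tendsto V atTop (nhds L) := hgtend.congr' hVg
  have hLge : ∀ t : ℝ, 0 ≤ t → L ≤ V t := by
    intro t ht
    have h := ciInf_le hgbdd t
    rw [hg] at h
    simpa [max_eq_left ht] using h
  have hL0 : 0 ≤ L :=
    ge_of_tendsto hVtend ((eventually_ge_atTop (0:ℝ)).mono fun t ht => hVnn t ht)
  -- L must be 0
  have hLzero : L = 0 := by
    by_contra hne
    have hLpos : 0 < L := lt_of_le_of_ne hL0 (Ne.symm hne)
    set W : ℝ → ℝ := fun t => V t + c * L ^ 2 * t with hW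
    have hWd : ∀ t : ℝ, 0 < t → HasDerivAt W (D t + c * L ^ 2) t := by
      intro t ht
      have h1 : HasDerivAt (fun u : ℝ => c * L ^ 2 * u) (c * L ^ 2) t := by
        simpa using (hasDerivAt_id t).const_mul (c * L ^ 2)
      exact (hV' t ht).add h1
    have hWanti : AntitoneOn W (Set.Ici 0) := by
      apply antitoneOn_of_deriv_nonpos (convex_Ici 0)
      · exact hVc.add ((continuous_const.mul continuous_id).continuousOn)
      · intro t ht
        rw [interior_Ici] at ht
        exact ((hWd t ht).differentiableAt).differentiableWithinAt
      · intro t ht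
        rw [interior_Ici] at ht
        rw [(hWd t ht).deriv]
        have h1 := hDle t ht.le
        have h3 : L ≤ V t := hLge t ht.le
        have h4 : L ^ 2 ≤ V t ^ 2 := by nlinarith
        have h5 : c * L ^ 2 ≤ c * V t ^ 2 := mul_le_mul_of_nonneg_left h4 hcpos.le
        linarith
    set T : ℝ := (V 0 + 1) / (c * L ^ 2) with hT
    have hnum : 0 < V 0 + 1 := by linarith [hVnn 0 le_rfl]
    have hden : 0 < c * L ^ 2 := by positivity
    have hTpos : 0 < T := div_pos hnum hden
    have hmono := hWanti Set.self_mem_Ici (Set.mem_Ici.mpr hTpos.le) hTpos.le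
    have hcalc : c * L ^ 2 * T = V 0 + 1 := by
      rw [hT]; field_simp
    have hVT : 0 ≤ V T := hVnn T hTpos.le
    have hW0 : W 0 = V 0 := by simp [hW]
    have hWT : W T = V T + (V 0 + 1) := by rw [hW]; simp only []; rw [hcalc]
    rw [hW0, hWT] at hmono
    linarith
  -- squeeze
  have hbound : ∀ t : ℝ, 0 ≤ t → x i0 t ≤ V t / η i0 := by
    intro t ht
    rw [le_div_iff₀ (hη i0)]
    have h := Finset.single_le_sum (f := fun i => η i * x i t)
      (fun i _ => mul_nonneg (hη i).le (hxnn i t ht)) (Finset.mem_univ i0)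
    calc x i0 t * η i0 = η i0 * x i0 t := by ring
      _ ≤ V t := h
  have hVtend0 : Tendsto V atTop (nhds 0) := hLzero ▸ hVtend
  have hdiv : Tendsto (fun t => V t / η i0) atTop (nhds 0) := by
    simpa using hVtend0.div_const (η i0)
  exact squeeze_zero'
    (by filter_upwards [eventually_ge_atTop (0:ℝ)] with t ht; exact hxnn i0 t ht)
    (by filter_upwards [eventually_ge_atTop (0:ℝ)] with t ht; exact hbound t ht)
    hdiv

end
end

section
/- Let K : [0,∞) → [0,∞) be integrable with ∫_0^∞ s·K(s) ds < ∞, and let x : ℝ → ℝ be a continuous function that is bounded on (−∞,0] and satisfies x ∈ L²([0,∞)). Then the function t ↦ ∫_0^∞ K(s) x(t−s)² ds, for t ≥ 0, belongs to L¹([0,∞)); indeed ∫_0^∞ (∫_0^∞ K(s) x(t−s)² ds) dt ≤ M·∫_0^∞ s·K(s) ds + (∫_0^∞ K(s) ds)·‖x‖²_{L²[0,∞)}, where M = sup_{t ≤ 0} x(t)². -/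
open MeasureTheory Filter Topology

theorem statement9 (K : ℝ → ℝ) (hKnn : ∀ s, (0:ℝ) ≤ s → 0 ≤ K s)
    (hKint : IntegrableOn K (Set.Ioi 0))
    (hKmom : IntegrableOn (fun s => s * K s) (Set.Ioi 0))
    (x : ℝ → ℝ) (hxc : Continuous x)
    (hxb : ∃ C, ∀ t ≤ (0:ℝ), |x t| ≤ C)
    (hL2 : IntegrableOn (fun t => x t ^ 2) (Set.Ici 0)) :
    IntegrableOn (fun t => ∫ s in Set.Ioi (0:ℝ), K s * x (t - s) ^ 2)
      (Set.Ici 0) ∧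
    (∫ t in Set.Ici (0:ℝ), ∫ s in Set.Ioi (0:ℝ), K s * x (t - s) ^ 2) ≤
      (⨆ t : Set.Iic (0:ℝ), x t ^ 2) * (∫ s in Set.Ioi (0:ℝ), s * K s) +
        (∫ s in Set.Ioi (0:ℝ), K s) * ∫ t in Set.Ici (0:ℝ), x t ^ 2 := by
  obtain ⟨C, hC⟩ := hxb
  set M : ℝ := ⨆ t : Set.Iic (0:ℝ), x t ^ 2 with hMdef
  set L : ℝ := ∫ t in Set.Ici (0:ℝ), x t ^ 2 with hLdef
  have hbdd : BddAbove (Set.range fun t : Set.Iic (0:ℝ) => x (t : ℝ) ^ 2) := by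
    refine ⟨C ^ 2, ?_⟩
    rintro _ ⟨⟨t, ht⟩, rfl⟩
    calc x t ^ 2 = |x t| ^ 2 := (sq_abs _).symm
      _ ≤ C ^ 2 := pow_le_pow_left₀ (abs_nonneg _) (hC t ht) 2
  have hMle : ∀ u ≤ (0:ℝ), x u ^ 2 ≤ M := fun u hu =>
    le_ciSup hbdd (⟨u, hu⟩ : Set.Iic (0:ℝ))
  have hM0 : (0:ℝ) ≤ M := le_trans (sq_nonneg _) (hMle 0 le_rfl)
  have hL0 : (0:ℝ) ≤ L := integral_nonneg fun t => sq_nonneg _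
  -- the shift map
  have emb : ∀ s : ℝ, MeasurableEmbedding (fun t : ℝ => t - s) := fun s =>
    (MeasurableEquiv.subRight s).measurableEmbedding
  have mp : ∀ s : ℝ, MeasurePreserving (fun t : ℝ => t - s) volume volume := fun s =>
    measurePreserving_sub_right volume s
  have hpre : ∀ s : ℝ, (fun t : ℝ => t - s) ⁻¹' Set.Ici (-s) = Set.Ici 0 := by
    intro s; ext t
    simp only [Set.mem_preimage, Set.mem_Ici]
    constructor <;> intro h <;> linarith
  have hIci : ∀ s : ℝ, 0 ≤ s → IntegrableOn (fun u => x u ^ 2) (Set.Ici (-s)) := by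
    intro s hs
    rw [← Set.Ico_union_Ici_eq_Ici (neg_nonpos.mpr hs)]
    exact (((hxc.pow 2).integrableOn_Icc).mono_set Set.Ico_subset_Icc_self).union hL2
  have hshift : ∀ s : ℝ, 0 ≤ s →
      IntegrableOn (fun t => x (t - s) ^ 2) (Set.Ici 0) := by
    intro s hs
    have h1 := ((emb s).integrableOn_map_iff
      (f := fun u => x u ^ 2) (μ := volume) (s := Set.Ici (-s)))
    rw [(mp s).map_eq] at h1
    have h2 := h1.mp (hIci s hs)
    rwa [hpre s] at h2
  have hval : ∀ s : ℝ, 0 ≤ s →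
      (∫ t in Set.Ici (0:ℝ), x (t - s) ^ 2) ≤ M * s + L := by
    intro s hs
    have heq : (∫ t in Set.Ici (0:ℝ), x (t - s) ^ 2)
        = ∫ u in Set.Ici (-s), x u ^ 2 := by
      rw [← hpre s]
      exact (mp s).setIntegral_preimage_emb (emb s) (fun u => x u ^ 2) (Set.Ici (-s))
    have hsplit : (∫ u in Set.Ici (-s), x u ^ 2)
        = (∫ u in Set.Ico (-s) 0, x u ^ 2) + ∫ u in Set.Ici (0:ℝ), x u ^ 2 := by
      rw [← setIntegral_union (f := fun u => x u ^ 2) (Set.disjoint_left.mpr fun u hu hu' => hu.2.not_ge hu') measurableSet_Ici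
        (((hxc.pow 2).integrableOn_Icc).mono_set Set.Ico_subset_Icc_self) hL2,
        Set.Ico_union_Ici_eq_Ici (neg_nonpos.mpr hs)]
    have hIco : (∫ u in Set.Ico (-s) 0, x u ^ 2) ≤ M * s := by
      have h1 : (∫ u in Set.Ico (-s) 0, x u ^ 2) ≤ ∫ _ in Set.Ico (-s) 0, M := by
        refine setIntegral_mono_on (((hxc.pow 2).integrableOn_Icc).mono_set Set.Ico_subset_Icc_self)
          (integrableOn_const ?_) measurableSet_Ico
          (fun u hu => hMle u hu.2.le)
        rw [Real.volume_Ico]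
        exact ENNReal.ofReal_ne_top
      have h2 : (∫ _ in Set.Ico (-s) 0, M) = s * M := by
        rw [setIntegral_const, measureReal_def, Real.volume_Ico, smul_eq_mul]
        congr 1
        rw [ENNReal.toReal_ofReal (by linarith)]
        ring
      rw [h2] at h1
      linarith [h1]
    rw [heq, hsplit]
    have : (∫ u in Set.Ici (0:ℝ), x u ^ 2) = L := rfl
    linarith [hIco]
  -- product measurability
  set μ := volume.restrict (Set.Ici (0:ℝ)) with hμ
  set ν := volume.restrict (Set.Ioi (0:ℝ)) with hν
  have hKnn' : ∀ᵐ s ∂ν, 0 ≤ s := by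
    filter_upwards [self_mem_ae_restrict measurableSet_Ioi] with s hs
    exact le_of_lt hs
  have hfm : AEStronglyMeasurable (fun p : ℝ × ℝ => K p.2 * x (p.1 - p.2) ^ 2)
      (μ.prod ν) := by
    have h1 : AEStronglyMeasurable K ν := hKint.aestronglyMeasurable
    have h2 : Continuous fun p : ℝ × ℝ => x (p.1 - p.2) ^ 2 :=
      (hxc.comp (continuous_fst.sub continuous_snd)).pow 2
    exact (h1.comp_snd).mul h2.aestronglyMeasurable
  have hg : Integrable (fun s => M * (s * K s) + L * K s) ν :=
    (hKmom.const_mul M).add (hKint.const_mul L)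
  have hint : Integrable (fun p : ℝ × ℝ => K p.2 * x (p.1 - p.2) ^ 2) (μ.prod ν) := by
    rw [integrable_prod_iff' hfm]
    constructor
    · filter_upwards [hKnn'] with s hs
      exact (hshift s hs).const_mul (K s)
    · have hmeas : AEStronglyMeasurable
          (fun s => ∫ t, ‖K s * x (t - s) ^ 2‖ ∂μ) ν :=
        hfm.norm.prod_swap.integral_prod_right'
      refine Integrable.mono hg hmeas ?_
      filter_upwards [hKnn'] with s hs
      have hKs := hKnn s hs
      have hnorm : (∫ t, ‖K s * x (t - s) ^ 2‖ ∂μ)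
          = K s * ∫ t in Set.Ici (0:ℝ), x (t - s) ^ 2 := by
        rw [← integral_const_mul]
        refine integral_congr_ae (Eventually.of_forall fun t => ?_)
        show ‖K s * x (t - s) ^ 2‖ = K s * x (t - s) ^ 2
        rw [Real.norm_eq_abs, abs_of_nonneg (mul_nonneg hKs (sq_nonneg _))]
      have hle : (∫ t, ‖K s * x (t - s) ^ 2‖ ∂μ) ≤ M * (s * K s) + L * K s := by
        rw [hnorm]
        calc K s * ∫ t in Set.Ici (0:ℝ), x (t - s) ^ 2
            ≤ K s * (M * s + L) :=
              mul_le_mul_of_nonneg_left (hval s hs) hKs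
          _ = M * (s * K s) + L * K s := by ring
      have hnn : 0 ≤ ∫ t, ‖K s * x (t - s) ^ 2‖ ∂μ :=
        integral_nonneg fun t => norm_nonneg _
      rw [Real.norm_eq_abs, Real.norm_eq_abs, abs_of_nonneg hnn]
      exact hle.trans (le_abs_self _)
  refine ⟨hint.integral_prod_left, ?_⟩
  rw [integral_integral_swap (f := fun t s => K s * x (t - s) ^ 2) hint]
  have step : (∫ s, (∫ t, K s * x (t - s) ^ 2 ∂μ) ∂ν)
      ≤ ∫ s, (M * (s * K s) + L * K s) ∂ν := by
    refine integral_mono_of_nonneg ?_ hg ?_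
    · filter_upwards [hKnn'] with s hs
      have h0 : 0 ≤ K s * ∫ t, x (t - s) ^ 2 ∂μ :=
        mul_nonneg (hKnn s hs) (integral_nonneg fun t => sq_nonneg _)
      rwa [← integral_const_mul] at h0
    · filter_upwards [hKnn'] with s hs
      rw [integral_const_mul]
      calc K s * ∫ t, x (t - s) ^ 2 ∂μ
          ≤ K s * (M * s + L) := mul_le_mul_of_nonneg_left (hval s hs) (hKnn s hs)
        _ = M * (s * K s) + L * K s := by ring
  refine step.trans ?_
  rw [integral_add (hKmom.const_mul M) (hKint.const_mul L),
    integral_const_mul, integral_const_mul]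
  have : L * ∫ s, K s ∂ν = (∫ s in Set.Ioi (0:ℝ), K s) * L := mul_comm _ _
  linarith [this]
end

section
/- Let e > 0 and d > 0, let x : [0,∞) → [0,∞) be a bounded continuous function, and let u : [0,∞) → ℝ be differentiable with u′(t) = −e·u(t) + d·x(t) for all t > 0. Then 0 ≤ liminf_{t→∞} x(t) ≤ (e/d)·liminf_{t→∞} u(t) ≤ (e/d)·limsup_{t→∞} u(t) ≤ limsup_{t→∞} x(t). -/
open MeasureTheory Filter Topology

lemma aux_upper10 (e d : ℝ) (he : 0 < e) (x u : ℝ → ℝ)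
    (huc : ContinuousOn u (Set.Ici 0))
    (hode : ∀ t, (0:ℝ) < t → HasDerivAt u (-e * u t + d * x t) t)
    (hd : 0 ≤ d) (t0 M : ℝ) (ht0 : 0 ≤ t0) (hM : ∀ s, t0 ≤ s → x s ≤ M) :
    ∀ t, t0 ≤ t → u t ≤ d * M / e + (u t0 - d * M / e) * Real.exp (-(e * (t - t0))) := by
  set c : ℝ := d * M / e with hc
  set w : ℝ → ℝ := fun t => Real.exp (e * t) * (u t - c) with hw
  have hwd : ∀ t ∈ interior (Set.Ici t0), HasDerivAt w (Real.exp (e * t) * (d * (x t - M))) t := by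
    intro t ht
    rw [interior_Ici] at ht
    have ht' : (0:ℝ) < t := lt_of_le_of_lt ht0 ht
    have h1 : HasDerivAt (fun s : ℝ => Real.exp (e * s)) (e * Real.exp (e * t)) t := by
      have := (Real.hasDerivAt_exp (e * t)).comp t ((hasDerivAt_id t).const_mul e)
      exact this.congr_deriv (by ring)
    have h2 : HasDerivAt (fun s => u s - c) (-e * u t + d * x t) t := by
      simpa using (hode t ht').sub_const c
    have := h1.mul h2
    refine this.congr_deriv ?_
    have he' : e ≠ 0 := ne_of_gt he
    rw [hc]
    field_simp
    ring
  have hcw : ContinuousOn w (Set.Ici t0) := by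
    apply ContinuousOn.mul (Continuous.continuousOn (by continuity))
    exact ((huc.mono (Set.Ici_subset_Ici.2 ht0)).sub continuousOn_const)
  have hanti : AntitoneOn w (Set.Ici t0) := by
    apply antitoneOn_of_deriv_nonpos (convex_Ici t0) hcw
    · intro t ht
      exact (hwd t ht).differentiableAt.differentiableWithinAt
    · intro t ht
      rw [(hwd t ht).deriv]
      have ht' : t0 ≤ t := le_of_lt (by rwa [interior_Ici] at ht)
      have h1 : x t - M ≤ 0 := sub_nonpos.2 (hM t ht')
      exact mul_nonpos_of_nonneg_of_nonpos (Real.exp_pos _).le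
        (mul_nonpos_of_nonneg_of_nonpos hd h1)
  intro t ht
  have := hanti (Set.self_mem_Ici) ht ht
  have hwle : Real.exp (e * t) * (u t - c) ≤ Real.exp (e * t0) * (u t0 - c) := this
  have hept : (0:ℝ) < Real.exp (e * t) := Real.exp_pos _
  have hexp : Real.exp (e*t) * Real.exp (-(e*(t-t0))) = Real.exp (e*t0) := by
    rw [← Real.exp_add]; ring_nf
  have h2 : Real.exp (e*t) * ((u t0 - c) * Real.exp (-(e*(t-t0)))) = Real.exp (e*t0) * (u t0 - c) := by
    rw [← hexp]; ring
  have h3 : Real.exp (e*t) * (u t - c) ≤ Real.exp (e*t) * ((u t0 - c) * Real.exp (-(e*(t-t0)))) := by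
    rw [h2]; exact hwle
  have key := le_of_mul_le_mul_left h3 hept
  linarith

lemma aux_lower10 (e d : ℝ) (he : 0 < e) (x u : ℝ → ℝ)
    (huc : ContinuousOn u (Set.Ici 0))
    (hode : ∀ t, (0:ℝ) < t → HasDerivAt u (-e * u t + d * x t) t)
    (hd : 0 ≤ d) (t0 m : ℝ) (ht0 : 0 ≤ t0) (hm : ∀ s, t0 ≤ s → m ≤ x s) :
    ∀ t, t0 ≤ t → d * m / e + (u t0 - d * m / e) * Real.exp (-(e * (t - t0))) ≤ u t := by
  have h := aux_upper10 e d he (fun s => -x s) (fun s => -u s)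
    (huc.neg)
    (fun t ht => by
      have := (hode t ht).neg
      exact this.congr_deriv (by beta_reduce; ring))
    hd t0 (-m) ht0 (fun s hs => by simpa using hm s hs)
  intro t ht
  have h1 := h t ht
  have e1 : d * -m / e = -(d * m / e) := by ring
  rw [e1] at h1
  nlinarith [Real.exp_pos (-(e * (t - t0)))]

theorem statement10 (e d : ℝ) (he : 0 < e) (hd : 0 < d)
    (x u : ℝ → ℝ)
    (hxc : ContinuousOn x (Set.Ici 0))
    (hxnn : ∀ t, (0:ℝ) ≤ t → 0 ≤ x t)
    (hxb : ∃ C, ∀ t, (0:ℝ) ≤ t → x t ≤ C)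
    (huc : ContinuousOn u (Set.Ici 0))
    (hode : ∀ t, (0:ℝ) < t → HasDerivAt u (-e * u t + d * x t) t) :
    0 ≤ Filter.liminf x Filter.atTop ∧
    Filter.liminf x Filter.atTop ≤ e / d * Filter.liminf u Filter.atTop ∧
    e / d * Filter.liminf u Filter.atTop ≤ e / d * Filter.limsup u Filter.atTop ∧
    e / d * Filter.limsup u Filter.atTop ≤ Filter.limsup x Filter.atTop := by
  obtain ⟨C, hC⟩ := hxb
  -- convergence of the exponential tail
  have hexp0 : ∀ t0 : ℝ, Tendsto (fun t => Real.exp (-(e * (t - t0)))) atTop (𝓝 0) := by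
    intro t0
    apply Real.tendsto_exp_atBot.comp
    apply tendsto_neg_atTop_atBot.comp
    exact (tendsto_atTop_add_const_right atTop (-t0) tendsto_id).const_mul_atTop he
  -- u is eventually bounded above and below
  have hubd : IsBoundedUnder (· ≤ ·) atTop u := by
    refine ⟨d * C / e + |u 0 - d * C / e|, eventually_map.2 ?_⟩
    filter_upwards [eventually_ge_atTop (0:ℝ)] with t ht
    have h := aux_upper10 e d he x u huc hode hd.le 0 C le_rfl hC t ht
    have h1 : Real.exp (-(e * (t - 0))) ≤ 1 := by
      rw [Real.exp_le_one_iff]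
      nlinarith
    have h2 := Real.exp_pos (-(e * (t - 0)))
    have h3 : (u 0 - d * C / e) * Real.exp (-(e * (t - 0))) ≤ |u 0 - d * C / e| := by
      rcases le_or_gt 0 (u 0 - d * C / e) with hs | hs
      · calc (u 0 - d * C / e) * Real.exp (-(e * (t - 0))) ≤ (u 0 - d * C / e) * 1 :=
              mul_le_mul_of_nonneg_left h1 hs
          _ ≤ |u 0 - d * C / e| := by rw [mul_one]; exact le_abs_self _
      · have : (u 0 - d * C / e) * Real.exp (-(e * (t - 0))) ≤ 0 :=
          mul_nonpos_of_nonpos_of_nonneg hs.le h2.le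
        exact this.trans (abs_nonneg _)
    linarith
  have hlbd : IsBoundedUnder (· ≥ ·) atTop u := by
    refine ⟨-|u 0|, eventually_map.2 ?_⟩
    filter_upwards [eventually_ge_atTop (0:ℝ)] with t ht
    have h := aux_lower10 e d he x u huc hode hd.le 0 0 le_rfl (fun s hs => hxnn s hs) t ht
    have h1 : Real.exp (-(e * (t - 0))) ≤ 1 := by
      rw [Real.exp_le_one_iff]; nlinarith
    have h2 := Real.exp_pos (-(e * (t - 0)))
    have h3 : -|u 0| ≤ (u 0 - d * 0 / e) * Real.exp (-(e * (t - 0))) := by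
      rcases le_or_gt 0 (u 0) with hs | hs
      · have : (0:ℝ) ≤ (u 0 - d * 0 / e) * Real.exp (-(e * (t - 0))) := by
          apply mul_nonneg _ h2.le; simpa using hs
        linarith [abs_nonneg (u 0)]
      · have e2 : u 0 - d * 0 / e = u 0 := by ring
        rw [e2]
        have : u 0 * Real.exp (-(e * (t - 0))) ≥ u 0 * 1 := by
          apply mul_le_mul_of_nonpos_left h1 hs.le
        rw [mul_one] at this
        linarith [neg_abs_le (u 0)]
    have h4 : d * 0 / e = 0 := by ring
    rw [h4] at h h3
    linarith
  -- limsup bound: eventually x ≤ M implies limsup u ≤ d M / e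
  have hlimsup_le : ∀ M : ℝ, (∀ᶠ t in atTop, x t ≤ M) → limsup u atTop ≤ d * M / e := by
    intro M hM
    obtain ⟨t0, ht0⟩ := eventually_atTop.1 hM
    set t1 := max t0 0 with ht1
    have ht1' : (0:ℝ) ≤ t1 := le_max_right _ _
    have hM' : ∀ s, t1 ≤ s → x s ≤ M := fun s hs => ht0 s ((le_max_left _ _).trans hs)
    have hb := aux_upper10 e d he x u huc hode hd.le t1 M ht1' hM'
    set g : ℝ → ℝ := fun t => d * M / e + (u t1 - d * M / e) * Real.exp (-(e * (t - t1))) with hg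
    have hgt : Tendsto g atTop (𝓝 (d * M / e)) := by
      have h1 := (hexp0 t1).const_mul (u t1 - d * M / e)
      rw [mul_zero] at h1
      have h2 := (tendsto_const_nhds (x := d * M / e) (f := atTop)).add h1
      simpa [hg] using h2
    calc limsup u atTop ≤ limsup g atTop := by
          apply limsup_le_limsup _ hlbd.isCoboundedUnder_le hgt.isBoundedUnder_le
          filter_upwards [eventually_ge_atTop t1] with t ht using hb t ht
      _ = d * M / e := hgt.limsup_eq
  -- liminf bound: eventually m ≤ x implies d m / e ≤ liminf u
  have hliminf_ge : ∀ m : ℝ, (∀ᶠ t in atTop, m ≤ x t) → d * m / e ≤ liminf u atTop := by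
    intro m hm
    obtain ⟨t0, ht0⟩ := eventually_atTop.1 hm
    set t1 := max t0 0 with ht1
    have ht1' : (0:ℝ) ≤ t1 := le_max_right _ _
    have hm' : ∀ s, t1 ≤ s → m ≤ x s := fun s hs => ht0 s ((le_max_left _ _).trans hs)
    have hb := aux_lower10 e d he x u huc hode hd.le t1 m ht1' hm'
    set g : ℝ → ℝ := fun t => d * m / e + (u t1 - d * m / e) * Real.exp (-(e * (t - t1))) with hg
    have hgt : Tendsto g atTop (𝓝 (d * m / e)) := by
      have h1 := (hexp0 t1).const_mul (u t1 - d * m / e)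
      rw [mul_zero] at h1
      have h2 := (tendsto_const_nhds (x := d * m / e) (f := atTop)).add h1
      simpa [hg] using h2
    calc d * m / e = liminf g atTop := hgt.liminf_eq.symm
      _ ≤ liminf u atTop := by
          apply liminf_le_liminf _ hgt.isBoundedUnder_ge hubd.isCoboundedUnder_ge
          filter_upwards [eventually_ge_atTop t1] with t ht using hb t ht
  -- bounds for x
  have hxub : IsBoundedUnder (· ≤ ·) atTop x := by
    refine ⟨C, eventually_map.2 ?_⟩
    filter_upwards [eventually_ge_atTop (0:ℝ)] with t ht using hC t ht
  have hxlb : IsBoundedUnder (· ≥ ·) atTop x := by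
    refine ⟨0, eventually_map.2 ?_⟩
    filter_upwards [eventually_ge_atTop (0:ℝ)] with t ht using hxnn t ht
  have hLx0 : (0:ℝ) ≤ liminf x atTop := by
    apply le_liminf_of_le hxub.isCoboundedUnder_ge
    filter_upwards [eventually_ge_atTop (0:ℝ)] with t ht using hxnn t ht
  have hde : e / d > 0 := div_pos he hd
  refine ⟨hLx0, ?_, ?_, ?_⟩
  · -- liminf x ≤ e/d * liminf u
    apply le_of_forall_pos_le_add
    intro ε hε
    have hm : ∀ᶠ t in atTop, liminf x atTop - ε < x t := by
      apply eventually_lt_of_lt_liminf _ hxlb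
      linarith
    have := hliminf_ge (liminf x atTop - ε) (hm.mono fun t ht => ht.le)
    have h2 : e / d * (d * (liminf x atTop - ε) / e) ≤ e / d * liminf u atTop :=
      mul_le_mul_of_nonneg_left this hde.le
    have h3 : e / d * (d * (liminf x atTop - ε) / e) = liminf x atTop - ε := by
      field_simp
    linarith
  · exact mul_le_mul_of_nonneg_left (liminf_le_limsup hubd hlbd) hde.le
  · -- e/d * limsup u ≤ limsup x
    apply le_of_forall_pos_le_add
    intro ε hε
    have hM : ∀ᶠ t in atTop, x t < limsup x atTop + ε := by
      apply eventually_lt_of_limsup_lt _ hxub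
      linarith
    have := hlimsup_le (limsup x atTop + ε) (hM.mono fun t ht => ht.le)
    have h2 : e / d * limsup u atTop ≤ e / d * (d * (limsup x atTop + ε) / e) :=
      mul_le_mul_of_nonneg_left this hde.le
    have h3 : e / d * (d * (limsup x atTop + ε) / e) = limsup x atTop + ε := by
      field_simp
    linarith
end

section
/- Assume (H0) and let p ∈ {1,…,n−1}. Suppose the p×p matrix [δ_{ij} μ_i − |a_{ij}|] (1 ≤ i,j ≤ p) is a non-singular M-matrix. Let (x(t), u(t)) be a positive solution of (E) such that x_q(t) → 0 as t → ∞ for every q = p+1,…,n. Then (x(t), u(t)) is bounded on [0,∞), i.e., sup_{t ≥ 0} x_i(t) < ∞ and sup_{t ≥ 0} u_i(t) < ∞ for all i = 1,…,n. -/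
open MeasureTheory Filter Topology

noncomputable section

/-- Hypothesis (H0) on the coefficients and the kernels of system (E). -/
def H0 (n : ℕ) (μ c d e : Fin n → ℝ) (K : Fin n → Fin n → ℝ → ℝ)
    (G : Fin n → ℝ → ℝ) : Prop :=
  (∀ i, 0 < μ i) ∧ (∀ i, 0 ≤ c i) ∧ (∀ i, 0 < d i) ∧ (∀ i, 0 < e i) ∧
  (∀ i j s, (0:ℝ) ≤ s → 0 ≤ K i j s) ∧ (∀ i s, (0:ℝ) ≤ s → 0 ≤ G i s) ∧
  (∀ i j, IntegrableOn (K i j) (Set.Ioi 0)) ∧ (∀ i, IntegrableOn (G i) (Set.Ioi 0)) ∧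
  (∀ i j, ∫ s in Set.Ioi (0:ℝ), K i j s = 1) ∧ (∀ i, ∫ s in Set.Ioi (0:ℝ), G i s = 1) ∧
  (∀ i j, IntegrableOn (fun s => s * K i j s) (Set.Ioi 0)) ∧
  (∀ i, IntegrableOn (fun s => s * G i s) (Set.Ioi 0))

/-- A positive solution of the controlled Lotka–Volterra system (E): continuous
functions, nonnegative and bounded on `(-∞,0]`, positive on `[0,∞)`, satisfying
the delay differential equations for `t > 0`. -/
def IsPositiveSolution (n : ℕ) (b : Fin n → ℝ) (a : Fin n → Fin n → ℝ)
    (μ c d e : Fin n → ℝ) (K : Fin n → Fin n → ℝ → ℝ) (G : Fin n → ℝ → ℝ)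
    (x u : Fin n → ℝ → ℝ) : Prop :=
  (∀ i, Continuous (x i)) ∧ (∀ i, Continuous (u i)) ∧
  (∀ i t, t ≤ (0:ℝ) → 0 ≤ x i t) ∧ (∀ i t, t ≤ (0:ℝ) → 0 ≤ u i t) ∧
  (∀ i, ∃ C, ∀ t ≤ (0:ℝ), x i t ≤ C) ∧ (∀ i, ∃ C, ∀ t ≤ (0:ℝ), u i t ≤ C) ∧
  (∀ i t, (0:ℝ) ≤ t → 0 < x i t) ∧ (∀ i t, (0:ℝ) ≤ t → 0 < u i t) ∧
  (∀ i t, (0:ℝ) < t → HasDerivAt (x i)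
      (x i t * (b i - μ i * x i t
        - (∑ j, a i j * ∫ s in Set.Ioi (0:ℝ), K i j s * x j (t - s))
        - c i * ∫ s in Set.Ioi (0:ℝ), G i s * u i (t - s))) t) ∧
  (∀ i t, (0:ℝ) < t → HasDerivAt (u i) (-(e i) * u i t + d i * x i t) t)

/-- A saturated equilibrium of (E): `x* ≥ 0`, `u_i* = (d_i/e_i) x_i*`, and for each
`i` either `x_i* > 0` and `(M x*)_i = b_i`, or `x_i* = 0` and `(M x*)_i ≥ b_i`,
where `M = [δ_ij λ_i + a_ij]` with `λ_i = μ_i + c_i d_i / e_i`. -/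
def IsSaturatedEquilibrium (n : ℕ) (b : Fin n → ℝ) (a : Fin n → Fin n → ℝ)
    (μ c d e : Fin n → ℝ) (xs us : Fin n → ℝ) : Prop :=
  (∀ i, 0 ≤ xs i) ∧ (∀ i, us i = d i / e i * xs i) ∧
  ∀ i, (0 < xs i ∧ (μ i + c i * d i / e i) * xs i + (∑ j, a i j * xs j) = b i) ∨
       (xs i = 0 ∧ b i ≤ (μ i + c i * d i / e i) * xs i + (∑ j, a i j * xs j))


def schurC {m : ℕ} (A : Matrix (Fin (m+1)) (Fin (m+1)) ℝ) : Matrix (Fin m) (Fin m) ℝ :=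
  fun i j => A i.succ j.succ - A i.succ 0 * A 0 j.succ / A 0 0

lemma det_schurC {m : ℕ} (A : Matrix (Fin (m+1)) (Fin (m+1)) ℝ) (h : A 0 0 ≠ 0) :
    A.det = A 0 0 * (schurC A).det := by
  set c : Fin (m+1) → ℝ := fun i => if i = 0 then 0 else A i 0 / A 0 0 with hc
  set B : Matrix (Fin (m+1)) (Fin (m+1)) ℝ := fun i j => A i j - c i * A 0 j with hB
  have hAB : A.det = B.det := by
    apply Matrix.det_eq_of_forall_row_eq_smul_add_const c 0 (by simp [hc])
    intro i j
    have h0 : c 0 = 0 := by simp [hc]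
    simp only [hB, h0]
    ring
  have hB0 : ∀ i : Fin m, B i.succ 0 = 0 := by
    intro i
    have : c i.succ = A i.succ 0 / A 0 0 := by simp [hc, Fin.succ_ne_zero]
    simp [hB, this]
    field_simp
    ring
  have hsub : B.submatrix ((0 : Fin (m+1)).succAbove) Fin.succ = schurC A := by
    ext i j
    have : c i.succ = A i.succ 0 / A 0 0 := by simp [hc, Fin.succ_ne_zero]
    simp only [Matrix.submatrix_apply, Fin.succAbove_zero]
    simp [hB, schurC, Fin.succAbove_zero, this]
    ring
  rw [hAB, Matrix.det_succ_column_zero]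
  rw [Finset.sum_eq_single 0]
  · rw [hsub]
    have h00 : B 0 0 = A 0 0 := by simp [hB, hc]
    rw [h00]
    simp
  · intro i _ hi
    obtain ⟨j, rfl⟩ := Fin.exists_succ_eq.mpr hi
    rw [hB0 j]; ring
  · simp

lemma isPMatrix_apply_self_pos {m : ℕ} {A : Matrix (Fin m) (Fin m) ℝ}
    (hA : IsPMatrix A) (i : Fin m) : 0 < A i i := by
  have h := hA {i} ⟨i, Finset.mem_singleton_self i⟩
  letI : Unique {y // y ∈ ({i} : Finset (Fin m))} :=
    ⟨⟨⟨i, Finset.mem_singleton_self i⟩⟩, fun a => Subtype.ext (Finset.mem_singleton.mp a.2)⟩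
  rw [Matrix.det_unique] at h
  exact h

lemma det_submatrix_pos_of_injective {m k : ℕ} {A : Matrix (Fin m) (Fin m) ℝ}
    (hA : IsPMatrix A) (f : Fin k → Fin m) (hf : Function.Injective f) (hk : 0 < k) :
    0 < (A.submatrix f f).det := by
  set T : Finset (Fin m) := Finset.univ.image f with hT
  have hTne : T.Nonempty := ⟨f ⟨0, hk⟩, Finset.mem_image_of_mem f (Finset.mem_univ _)⟩
  have hmem : ∀ i, f i ∈ T := fun i => Finset.mem_image_of_mem f (Finset.mem_univ _)
  set g : Fin k → {y // y ∈ T} := fun i => ⟨f i, hmem i⟩ with hg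
  have hgbij : Function.Bijective g := by
    constructor
    · intro i j hij
      exact hf (congrArg Subtype.val hij)
    · rintro ⟨y, hy⟩
      obtain ⟨i, _, rfl⟩ := Finset.mem_image.mp hy
      exact ⟨i, rfl⟩
  have := hA T hTne
  have heq : A.submatrix f f =
      (A.submatrix (fun i : {y // y ∈ T} => (i : Fin m)) (fun j : {y // y ∈ T} => (j : Fin m))).submatrix
        (Equiv.ofBijective g hgbij) (Equiv.ofBijective g hgbij) := rfl
  rw [heq, Matrix.det_submatrix_equiv_self]
  exact this

lemma schurC_isPMatrix {m : ℕ} {A : Matrix (Fin (m+1)) (Fin (m+1)) ℝ}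
    (hA : IsPMatrix A) : IsPMatrix (schurC A) := by
  intro S hS
  have hA00 : 0 < A 0 0 := isPMatrix_apply_self_pos hA 0
  set k := S.card with hk
  have hkpos : 0 < k := Finset.card_pos.mpr hS
  set e := S.orderIsoOfFin rfl with he
  set f : Fin (k+1) → Fin (m+1) := Fin.cases 0 (fun i => ((e i : Fin m)).succ) with hf
  have hfinj : Function.Injective f := by
    intro i j hij
    induction i using Fin.cases with
    | zero =>
      induction j using Fin.cases with
      | zero => rfl
      | succ j =>
        simp only [hf, Fin.cases_zero, Fin.cases_succ] at hij
        exact absurd hij.symm (Fin.succ_ne_zero _)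
    | succ i =>
      induction j using Fin.cases with
      | zero =>
        simp only [hf, Fin.cases_zero, Fin.cases_succ] at hij
        exact absurd hij (Fin.succ_ne_zero _)
      | succ j =>
        simp only [hf, Fin.cases_succ] at hij
        have h2 : e i = e j := Subtype.ext (Fin.succ_injective _ hij)
        exact congrArg Fin.succ (e.injective h2)
  set B := A.submatrix f f with hBdef
  have hB00 : B 0 0 = A 0 0 := by simp [hBdef, hf]
  have hdetB : 0 < B.det := det_submatrix_pos_of_injective hA f hfinj (Nat.succ_pos _)
  have hschurB : schurC B = (schurC A).submatrix (fun i : Fin k => (e i : Fin m))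
      (fun j : Fin k => (e j : Fin m)) := by
    ext i j
    simp [schurC, hBdef, hf]
  have hdet := det_schurC B (by rw [hB00]; exact hA00.ne')
  rw [hB00, hschurB] at hdet
  have hpos : 0 < ((schurC A).submatrix (fun i : Fin k => (e i : Fin m))
      (fun j : Fin k => (e j : Fin m))).det := by
    have := hdetB
    rw [hdet] at this
    nlinarith [hA00]
  -- relate to subtype submatrix
  have heq : ((schurC A).submatrix (fun i : {y // y ∈ S} => (i : Fin m))
        (fun j : {y // y ∈ S} => (j : Fin m))).submatrix e.toEquiv e.toEquiv
      = (schurC A).submatrix (fun i : Fin k => (e i : Fin m)) (fun j : Fin k => (e j : Fin m)) := rfl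
  rw [← Matrix.det_submatrix_equiv_self e.toEquiv, heq]
  exact hpos

lemma semipositive_of_MMatrix' : ∀ (m : ℕ) (A : Matrix (Fin m) (Fin m) ℝ),
    (∀ i j, i ≠ j → A i j ≤ 0) → IsPMatrix A →
    ∃ v : Fin m → ℝ, (∀ i, 0 < v i) ∧ ∀ i, 0 < ∑ j, A i j * v j := by
  intro m
  induction m with
  | zero => exact fun A _ _ => ⟨fun i => 1, fun i => i.elim0, fun i => i.elim0⟩
  | succ m ih =>
    intro A hZ hP
    have hA00 : 0 < A 0 0 := isPMatrix_apply_self_pos hP 0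
    have hZ' : ∀ i j : Fin m, i ≠ j → schurC A i j ≤ 0 := by
      intro i j hij
      have h1 : A i.succ j.succ ≤ 0 := hZ _ _ (by simpa [Fin.succ_inj] using hij)
      have h2 : A i.succ 0 ≤ 0 := hZ _ _ (Fin.succ_ne_zero i)
      have h3 : A 0 j.succ ≤ 0 := hZ _ _ (Fin.succ_ne_zero j).symm
      have : 0 ≤ A i.succ 0 * A 0 j.succ / A 0 0 :=
        div_nonneg (by nlinarith) hA00.le
      simp only [schurC]
      linarith
    obtain ⟨w, hwpos, hwrow⟩ := ih (schurC A) hZ' (schurC_isPMatrix hP)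
    set q : ℝ := ∑ j : Fin m, A 0 j.succ * w j with hq
    -- choose ε
    have hev : ∀ᶠ ε in 𝓝[>] (0:ℝ), (0 < ε ∧ ∀ i : Fin m,
        0 < (∑ j, schurC A i j * w j) + A i.succ 0 * ε / A 0 0) := by
      apply Filter.Eventually.and
      · exact self_mem_nhdsWithin
      · rw [eventually_all]
        intro i
        have hcont : Tendsto (fun ε : ℝ => (∑ j, schurC A i j * w j) + A i.succ 0 * ε / A 0 0)
            (𝓝[>] 0) (𝓝 ((∑ j, schurC A i j * w j) + A i.succ 0 * 0 / A 0 0)) := by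
          apply Tendsto.mono_left _ nhdsWithin_le_nhds
          exact Continuous.tendsto (by continuity) 0
        have : (∑ j, schurC A i j * w j) + A i.succ 0 * 0 / A 0 0 = ∑ j, schurC A i j * w j := by
          ring
        rw [this] at hcont
        exact hcont.eventually_const_lt (hwrow i)
    obtain ⟨ε, hε, hrow⟩ := hev.exists
    set v0 : ℝ := (ε - q) / A 0 0 with hv0
    have hqle : q ≤ 0 := by
      apply Finset.sum_nonpos
      intro j _
      exact mul_nonpos_of_nonpos_of_nonneg (hZ _ _ (Fin.succ_ne_zero j).symm) (hwpos j).le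
    have hv0pos : 0 < v0 := by
      apply div_pos _ hA00
      linarith
    refine ⟨Fin.cases v0 w, ?_, ?_⟩
    · intro i
      induction i using Fin.cases with
      | zero => simpa using hv0pos
      | succ i => simpa using hwpos i
    · intro i
      induction i using Fin.cases with
      | zero =>
        rw [Fin.sum_univ_succ]
        simp only [Fin.cases_zero, Fin.cases_succ]
        have : A 0 0 * v0 = ε - q := by
          rw [hv0]; field_simp
        rw [this]
        have : ∑ j : Fin m, A 0 j.succ * w j = q := rfl
        rw [this]
        linarith [hε]
      | succ i =>
        rw [Fin.sum_univ_succ]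
        simp only [Fin.cases_zero, Fin.cases_succ]
        have hterm : ∀ j : Fin m, A i.succ j.succ * w j
            = schurC A i j * w j + (A i.succ 0 / A 0 0) * (A 0 j.succ * w j) := by
          intro j
          simp only [schurC]
          field_simp
          ring
        rw [Finset.sum_congr rfl (fun j _ => hterm j), Finset.sum_add_distrib,
          ← Finset.mul_sum]
        have h2 : A i.succ 0 * v0 + (A i.succ 0 / A 0 0) * q = A i.succ 0 * ε / A 0 0 := by
          rw [hv0]; field_simp; ring
        have := hrow i
        show 0 < A i.succ 0 * v0 + (∑ j, schurC A i j * w j + A i.succ 0 / A 0 0 * ∑ j, A 0 j.succ * w j)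
        rw [← hq]
        linarith [h2, this]


lemma sum_dite_lt {n p : ℕ} (hpn : p ≤ n) (g : Fin p → ℝ) :
    ∑ j : Fin n, (if h : (j:ℕ) < p then g ⟨j, h⟩ else 0) = ∑ j : Fin p, g j := by
  have hmem : ∀ x : Fin n, x ∈ Finset.univ.map (Fin.castLEEmb hpn) ↔ (x:ℕ) < p := by
    intro x
    simp only [Finset.mem_map, Finset.mem_univ, true_and]
    constructor
    · rintro ⟨j, rfl⟩; exact j.isLt
    · intro h; exact ⟨⟨x, h⟩, rfl⟩
  rw [← Finset.sum_subset (Finset.subset_univ (Finset.univ.map (Fin.castLEEmb hpn)))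
    (fun x _ hx => dif_neg (by simpa using (hmem x).not.mp hx))]
  rw [Finset.sum_map]
  apply Finset.sum_congr rfl
  intro j _
  simp [Fin.castLEEmb, Fin.castLE]

lemma crossing_bound {m : ℕ} (f : Fin m → ℝ → ℝ) (M : Fin m → ℝ)
    (hf : ∀ i, Continuous (f i))
    (h0 : ∀ i, f i 0 < M i)
    (hneg : ∀ i t, t ≤ (0:ℝ) → f i t ≤ M i)
    (hder : ∀ i t0, 0 < t0 → f i t0 = M i →
      (∀ j t, t ≤ t0 → f j t ≤ M j) →
      ∃ D, D < 0 ∧ HasDerivAt (f i) D t0) :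
    ∀ i t, (0:ℝ) ≤ t → f i t ≤ M i := by
  by_contra hcon
  push_neg at hcon
  obtain ⟨i₀, t₁, ht₁, hgt⟩ := hcon
  set T : Set ℝ := Set.Ici 0 ∩ ⋃ i, {t | M i ≤ f i t} with hT
  have hTne : T.Nonempty := ⟨t₁, ht₁, Set.mem_iUnion.mpr ⟨i₀, hgt.le⟩⟩
  have hTclosed : IsClosed T := by
    apply isClosed_Ici.inter
    exact isClosed_iUnion_of_finite (fun i => isClosed_le continuous_const (hf i))
  have hbdd : BddBelow T := ⟨0, fun t ht => ht.1⟩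
  set t0 := sInf T with ht0def
  have ht0 : t0 ∈ T := hTclosed.csInf_mem hTne hbdd
  have ht0nonneg : 0 ≤ t0 := ht0.1
  have hmin : ∀ t, 0 ≤ t → t < t0 → ∀ i, f i t < M i := by
    intro t htn htlt i
    by_contra hge
    push_neg at hge
    exact absurd (csInf_le hbdd ⟨htn, Set.mem_iUnion.mpr ⟨i, hge⟩⟩) (not_le.mpr htlt)
  have ht0pos : 0 < t0 := by
    rcases ht0nonneg.lt_or_eq with h | h
    · exact h
    · exfalso
      obtain ⟨i, hi⟩ := Set.mem_iUnion.mp ht0.2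
      rw [← h] at hi
      exact absurd hi (not_le.mpr (h0 i))
  have hle : ∀ j t, t ≤ t0 → f j t ≤ M j := by
    intro j t ht
    rcases le_or_gt t 0 with h | h
    · exact hneg j t h
    rcases ht.lt_or_eq with h' | h'
    · exact (hmin t h.le h' j).le
    rw [h']
    have htend : Tendsto (f j) (𝓝[<] t0) (𝓝 (f j t0)) :=
      ((hf j).tendsto t0).mono_left nhdsWithin_le_nhds
    refine le_of_tendsto htend ?_
    filter_upwards [Ioo_mem_nhdsLT_of_mem (Set.mem_Ioc.mpr ⟨ht0pos, le_refl t0⟩)] with s hs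
    exact (hmin s hs.1.le hs.2 j).le
  obtain ⟨i, hi⟩ := Set.mem_iUnion.mp ht0.2
  have heq : f i t0 = M i := le_antisymm (hle i t0 le_rfl) hi
  obtain ⟨D, hD, hderiv⟩ := hder i t0 ht0pos heq hle
  have hs : Tendsto (slope (f i) t0) (𝓝[≠] t0) (𝓝 D) :=
    hasDerivAt_iff_tendsto_slope.mp hderiv
  have hs' : Tendsto (slope (f i) t0) (𝓝[<] t0) (𝓝 D) :=
    hs.mono_left (nhdsWithin_mono _ (fun y hy => ne_of_lt hy))
  have hDnonneg : 0 ≤ D := by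
    refine ge_of_tendsto hs' ?_
    filter_upwards [Ioo_mem_nhdsLT_of_mem (Set.mem_Ioc.mpr ⟨ht0pos, le_refl t0⟩)] with s hsm
    rw [slope_def_field]
    have h1 : f i s < f i t0 := heq ▸ hmin s hsm.1.le hsm.2 i
    have h2 : s < t0 := hsm.2
    exact le_of_lt (div_pos_iff.mpr (Or.inr ⟨by linarith, by linarith⟩))
  linarith


theorem statement11 (n p : ℕ) (hp1 : 1 ≤ p) (hpn : p < n)
    (b : Fin n → ℝ) (a : Fin n → Fin n → ℝ)
    (μ c d e : Fin n → ℝ) (K : Fin n → Fin n → ℝ → ℝ) (G : Fin n → ℝ → ℝ)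
    (hH0 : H0 n μ c d e K G)
    (hM : IsNonsingularMMatrix (Matrix.of fun i j : Fin p =>
      (if i = j then μ (Fin.castLE hpn.le i) else 0) -
        |a (Fin.castLE hpn.le i) (Fin.castLE hpn.le j)|))
    (x u : Fin n → ℝ → ℝ)
    (hsol : IsPositiveSolution n b a μ c d e K G x u)
    (hext : ∀ q : Fin n, p ≤ (q : ℕ) →
      Filter.Tendsto (x q) Filter.atTop (nhds 0)) :
    ∀ i, (∃ C, ∀ t, (0:ℝ) ≤ t → x i t ≤ C) ∧
         (∃ C, ∀ t, (0:ℝ) ≤ t → u i t ≤ C) := by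
  obtain ⟨hμ, hc, hd, he, hK0, hG0, hKint, hGint, hK1, hG1, -, -⟩ := hH0
  obtain ⟨hxc, huc, hxneg, huneg, hxbd, hubd, hxpos, hupos, hxdeq, hudeq⟩ := hsol
  have hx0 : ∀ i t, 0 ≤ x i t := by
    intro i t
    rcases le_or_gt t 0 with h | h
    · exact hxneg i t h
    · exact (hxpos i t h.le).le
  have hu0 : ∀ i t, 0 ≤ u i t := by
    intro i t
    rcases le_or_gt t 0 with h | h
    · exact huneg i t h
    · exact (hupos i t h.le).le
  choose C0 hC0 using hxbd
  choose Cu0 hCu0 using hubd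
  -- global bounds for the extinct components
  have hBex : ∀ q : Fin n, ∃ Bq, 0 ≤ Bq ∧ ((p ≤ (q:ℕ)) → ∀ t, x q t ≤ Bq) := by
    intro q
    by_cases hq : p ≤ (q:ℕ)
    · obtain ⟨T, hT⟩ := eventually_atTop.mp ((hext q hq).eventually (gt_mem_nhds zero_lt_one))
      obtain ⟨ts, -, hmax⟩ := isCompact_Icc.exists_isMaxOn
        (Set.nonempty_Icc.mpr (le_max_right T 0)) (hxc q).continuousOn
      rw [isMaxOn_iff] at hmax
      refine ⟨max (max (C0 q) (x q ts)) 1, le_trans zero_le_one (le_max_right _ _),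
        fun _ t => ?_⟩
      rcases le_or_gt t 0 with h | h
      · exact le_trans (hC0 q t h) (le_trans (le_max_left _ _) (le_max_left _ _))
      rcases le_or_gt t (max T 0) with h2 | h2
      · exact le_trans (hmax t ⟨h.le, h2⟩) (le_trans (le_max_right _ _) (le_max_left _ _))
      · exact le_trans (hT t (le_trans (le_max_left T 0) h2.le)).le (le_max_right _ _)
    · exact ⟨0, le_rfl, fun h => absurd h hq⟩
  choose B hB0 hBglob using hBex
  -- the positive vector from the M-matrix condition
  obtain ⟨hZ, hP⟩ := hM
  obtain ⟨v, hv, hrow⟩ := semipositive_of_MMatrix' p _ hZ hP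
  set ip : Fin p → Fin n := Fin.castLE hpn.le with hip
  have hδ : ∀ i : Fin p, 0 < μ (ip i) * v i - ∑ j : Fin p, |a (ip i) (ip j)| * v j := by
    intro i
    have h := hrow i
    have hexp : (∑ j, (Matrix.of fun i j : Fin p =>
        (if i = j then μ (Fin.castLE hpn.le i) else 0) -
          |a (Fin.castLE hpn.le i) (Fin.castLE hpn.le j)|) i j * v j)
        = μ (ip i) * v i - ∑ j : Fin p, |a (ip i) (ip j)| * v j := by
      simp only [Matrix.of_apply, sub_mul, Finset.sum_sub_distrib, ite_mul, zero_mul, hip]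
      rw [Finset.sum_ite_eq Finset.univ i (fun j => μ (Fin.castLE hpn.le i) * v j)]
      simp
    rw [hexp] at h
    exact h
  -- choose L
  set S2 : Fin p → ℝ := fun i =>
    ∑ j : Fin n, (if (j:ℕ) < p then 0 else |a (ip i) j| * B j) with hS2
  have hLex : ∃ L : ℝ, 0 < L ∧ (∀ i : Fin p, max (C0 (ip i)) 0 < L * v i) ∧
      (∀ i : Fin p, b (ip i) + S2 i
        < L * (μ (ip i) * v i - ∑ j : Fin p, |a (ip i) (ip j)| * v j)) := by
    have hev : ∀ᶠ L : ℝ in atTop, 0 < L ∧ (∀ i : Fin p, max (C0 (ip i)) 0 < L * v i) ∧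
        (∀ i : Fin p, b (ip i) + S2 i
          < L * (μ (ip i) * v i - ∑ j : Fin p, |a (ip i) (ip j)| * v j)) := by
      refine (eventually_gt_atTop 0).and (Filter.Eventually.and ?_ ?_)
      · rw [eventually_all]
        intro i
        exact (Filter.Tendsto.atTop_mul_const (hv i) tendsto_id).eventually_gt_atTop _
      · rw [eventually_all]
        intro i
        exact (Filter.Tendsto.atTop_mul_const (hδ i) tendsto_id).eventually_gt_atTop _
    exact hev.exists
  obtain ⟨L, hL0, hLC, hLb⟩ := hLex
  -- the key uniform bound for the first p components
  have hxb : ∀ i : Fin p, ∀ t, 0 ≤ t → x (ip i) t ≤ L * v i := by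
    refine crossing_bound (fun i => x (ip i)) (fun i => L * v i) (fun i => hxc (ip i))
      (fun i => lt_of_le_of_lt (le_trans (hC0 (ip i) 0 le_rfl) (le_max_left _ _)) (hLC i))
      (fun i t ht => le_trans (le_trans (hC0 (ip i) t ht) (le_max_left _ _)) (hLC i).le)
      ?_
    intro i t0 ht0 heqM hle
    refine ⟨_, ?_, hxdeq (ip i) t0 ht0⟩
    set W : Fin n → ℝ := fun j => if h : (j:ℕ) < p then L * v ⟨j, h⟩ else B j with hW
    have hW0 : ∀ j, 0 ≤ W j := by
      intro j
      rw [hW]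
      dsimp only
      split
      · exact (mul_pos hL0 (hv _)).le
      · exact hB0 j
    have hxW : ∀ j : Fin n, ∀ τ, τ ≤ t0 → x j τ ≤ W j := by
      intro j τ hτ
      rw [hW]
      dsimp only
      split
      case isTrue h =>
        have hjip : ip ⟨(j:ℕ), h⟩ = j := Fin.ext rfl
        have := hle ⟨(j:ℕ), h⟩ τ hτ
        simpa only [hjip] using this
      case isFalse h => exact hBglob j (le_of_not_gt h) τ
    have hIG : 0 ≤ ∫ s in Set.Ioi (0:ℝ), G (ip i) s * u (ip i) (t0 - s) :=
      setIntegral_nonneg measurableSet_Ioi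
        (fun s hs => mul_nonneg (hG0 _ s (le_of_lt hs)) (hu0 _ _))
    have hI : ∀ j : Fin n, 0 ≤ (∫ s in Set.Ioi (0:ℝ), K (ip i) j s * x j (t0 - s)) ∧
        (∫ s in Set.Ioi (0:ℝ), K (ip i) j s * x j (t0 - s)) ≤ W j := by
      intro j
      have hptle : ∀ s ∈ Set.Ioi (0:ℝ), K (ip i) j s * x j (t0 - s) ≤ W j * K (ip i) j s := by
        intro s hs
        have hs' : (0:ℝ) < s := hs
        have hxle : x j (t0 - s) ≤ W j := hxW j _ (by linarith)
        calc K (ip i) j s * x j (t0 - s) ≤ K (ip i) j s * W j :=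
              mul_le_mul_of_nonneg_left hxle (hK0 _ _ s hs'.le)
          _ = W j * K (ip i) j s := mul_comm _ _
      have hint2 : IntegrableOn (fun s => W j * K (ip i) j s) (Set.Ioi 0) :=
        (hKint (ip i) j).const_mul (W j)
      have hmeas : AEStronglyMeasurable (fun s => K (ip i) j s * x j (t0 - s))
          (volume.restrict (Set.Ioi 0)) :=
        (hKint (ip i) j).aestronglyMeasurable.mul
          (((hxc j).comp (continuous_const.sub continuous_id)).aestronglyMeasurable.restrict)
      have hint1 : IntegrableOn (fun s => K (ip i) j s * x j (t0 - s)) (Set.Ioi 0) := by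
        apply Integrable.mono' hint2 hmeas
        rw [ae_restrict_iff' measurableSet_Ioi]
        apply ae_of_all
        intro s hs
        rw [Real.norm_eq_abs,
          abs_of_nonneg (mul_nonneg (hK0 _ _ s (le_of_lt hs)) (hx0 _ _))]
        exact hptle s hs
      constructor
      · exact setIntegral_nonneg measurableSet_Ioi
          (fun s hs => mul_nonneg (hK0 _ _ s (le_of_lt hs)) (hx0 _ _))
      · calc (∫ s in Set.Ioi (0:ℝ), K (ip i) j s * x j (t0 - s))
            ≤ ∫ s in Set.Ioi (0:ℝ), W j * K (ip i) j s :=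
              setIntegral_mono_on hint1 hint2 measurableSet_Ioi hptle
          _ = W j * ∫ s in Set.Ioi (0:ℝ), K (ip i) j s := MeasureTheory.integral_const_mul _ _
          _ = W j := by rw [hK1]; ring
    have hsum : -(∑ j, a (ip i) j * ∫ s in Set.Ioi (0:ℝ), K (ip i) j s * x j (t0 - s))
        ≤ ∑ j, |a (ip i) j| * W j := by
      rw [← Finset.sum_neg_distrib]
      apply Finset.sum_le_sum
      intro j _
      calc -(a (ip i) j * ∫ s in Set.Ioi (0:ℝ), K (ip i) j s * x j (t0 - s))
          = (-(a (ip i) j)) * ∫ s in Set.Ioi (0:ℝ), K (ip i) j s * x j (t0 - s) := by ring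
        _ ≤ |a (ip i) j| * ∫ s in Set.Ioi (0:ℝ), K (ip i) j s * x j (t0 - s) :=
            mul_le_mul_of_nonneg_right (neg_le_abs _) (hI j).1
        _ ≤ |a (ip i) j| * W j := mul_le_mul_of_nonneg_left (hI j).2 (abs_nonneg _)
    have hWsum : ∑ j, |a (ip i) j| * W j
        = L * (∑ j : Fin p, |a (ip i) (ip j)| * v j) + S2 i := by
      have hterm : ∀ j : Fin n, |a (ip i) j| * W j
          = (if h : (j:ℕ) < p then |a (ip i) (ip ⟨(j:ℕ), h⟩)| * v ⟨(j:ℕ), h⟩ else 0) * L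
            + (if (j:ℕ) < p then 0 else |a (ip i) j| * B j) := by
        intro j
        by_cases h : (j:ℕ) < p
        · have hjip : ip ⟨(j:ℕ), h⟩ = j := Fin.ext rfl
          rw [hW]
          dsimp only
          rw [dif_pos h, dif_pos h, if_pos h, hjip]
          ring
        · rw [hW]
          dsimp only
          rw [dif_neg h, dif_neg h, if_neg h]
          ring
      rw [Finset.sum_congr rfl (fun j _ => hterm j), Finset.sum_add_distrib,
        ← Finset.sum_mul, sum_dite_lt hpn.le (fun j => |a (ip i) (ip j)| * v j), hS2]
      ring
    have hcIG : 0 ≤ c (ip i) * ∫ s in Set.Ioi (0:ℝ), G (ip i) s * u (ip i) (t0 - s) :=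
      mul_nonneg (hc _) hIG
    have hx0eq : x (ip i) t0 = L * v i := heqM
    have hb := hLb i
    have hbr : b (ip i) - μ (ip i) * x (ip i) t0
        - (∑ j, a (ip i) j * ∫ s in Set.Ioi (0:ℝ), K (ip i) j s * x j (t0 - s))
        - c (ip i) * ∫ s in Set.Ioi (0:ℝ), G (ip i) s * u (ip i) (t0 - s) < 0 := by
      rw [hx0eq]
      rw [hWsum] at hsum
      nlinarith [hsum, hcIG, hb]
    exact mul_neg_of_pos_of_neg (hxpos _ t0 ht0.le) hbr
  -- conclusion
  intro i
  have hxibd : ∃ Cx, 0 ≤ Cx ∧ ∀ t, 0 ≤ t → x i t ≤ Cx := by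
    by_cases h : (i:ℕ) < p
    · refine ⟨max (L * v ⟨(i:ℕ), h⟩) 0, le_max_right _ _, fun t ht => ?_⟩
      have hjip : ip ⟨(i:ℕ), h⟩ = i := Fin.ext rfl
      have := hxb ⟨(i:ℕ), h⟩ t ht
      rw [hjip] at this
      exact le_trans this (le_max_left _ _)
    · exact ⟨B i, hB0 i, fun t _ => hBglob i (le_of_not_gt h) t⟩
  obtain ⟨Cx, hCx0, hCx⟩ := hxibd
  refine ⟨⟨Cx, hCx⟩, ?_⟩
  set Lu : ℝ := max (max (Cu0 i) 0) (d i * Cx / e i) + 1 with hLu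
  have hCuLu : max (max (Cu0 i) 0) (d i * Cx / e i) < Lu := by rw [hLu]; linarith
  have h0u : ∀ t ≤ (0:ℝ), u i t < Lu := fun t ht =>
    lt_of_le_of_lt (le_trans (hCu0 i t ht)
      (le_trans (le_max_left _ _) (le_max_left _ _))) hCuLu
  have hder : ∀ (jj : Fin 1) t0, 0 < t0 → u i t0 = Lu →
      (∀ (j : Fin 1) t, t ≤ t0 → u i t ≤ Lu) →
      ∃ D, D < 0 ∧ HasDerivAt (u i) D t0 := by
    intro _ t0 ht0 hequ _
    refine ⟨_, ?_, hudeq i t0 ht0⟩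
    rw [hequ]
    have h1 : d i * x i t0 ≤ d i * Cx := mul_le_mul_of_nonneg_left (hCx t0 ht0.le) (hd i).le
    have h2 : d i * Cx / e i < Lu := lt_of_le_of_lt (le_max_right _ _) hCuLu
    have h3 : d i * Cx < Lu * e i := (div_lt_iff₀ (he i)).mp h2
    nlinarith [he i]
  have := crossing_bound (fun _ : Fin 1 => u i) (fun _ => Lu) (fun _ => huc i)
    (fun _ => h0u 0 le_rfl) (fun _ t ht => (h0u t ht).le) hder
  exact ⟨Lu, fun t ht => this 0 t ht⟩


end
end

section
/- Assume (H0). Let p ∈ {1,…,n−1} and fix q ∈ {p+1,…,n}. Suppose there exists a vector α = (α_1,…,α_p) with α_i ≥ 0 such that: Σ_{i=1}^p α_i b_i − b_q > 0; Σ_{i=1}^p α_i (δ_{ij} λ_i + a_{ij}) − a_{qj} ≤ 0 for j = 1,…,p; and Σ_{i=1}^p α_i a_{ij} − (δ_{qj} λ_q + a_{qj}) ≤ 0 for j = p+1,…,n. If α = 0, suppose in addition μ_q − a_{qq}⁻ > 0. Then for every positive solution (x(t), u(t)) of (E) that is bounded on [0,∞), there exist constants η > 0 and C > 0 such that x_q(t)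 ≤ C·e^{−η t} for all t ≥ 0; in particular x_q ∈ L²([0,∞)) and x_q(t) → 0 as t → ∞. -/
open MeasureTheory Filter Topology

noncomputable section

lemma delay_aux (f K : ℝ → ℝ) (M : ℝ) (hf : Continuous f)
    (hfb : ∀ t, |f t| ≤ M)
    (hK0 : ∀ s, 0 ≤ s → 0 ≤ K s)
    (hKint : IntegrableOn K (Set.Ioi 0))
    (hsK : IntegrableOn (fun s => s * K s) (Set.Ioi 0)) :
    ∃ P : ℝ → ℝ,
      (∀ t, |P t| ≤ M * ∫ s in Set.Ioi (0:ℝ), s * K s) ∧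
      (∀ t, HasDerivAt P ((∫ s in Set.Ioi (0:ℝ), K s) * f t
          - ∫ s in Set.Ioi (0:ℝ), K s * f (t - s)) t) := by
  have hM : 0 ≤ M := le_trans (abs_nonneg _) (hfb 0)
  set Φ : ℝ → ℝ := fun t => ∫ u in (0:ℝ)..t, f u with hΦdef
  have hΦ : ∀ t, HasDerivAt Φ (f t) t := fun t =>
    intervalIntegral.integral_hasDerivAt_right (hf.intervalIntegrable _ _)
      (hf.stronglyMeasurable.stronglyMeasurableAtFilter) hf.continuousAt
  have hΦc : Continuous Φ := continuous_iff_continuousAt.2 fun t => (hΦ t).continuousAt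
  have hΦsub : ∀ t s, |Φ t - Φ (t - s)| ≤ M * |s| := by
    intro t s
    have h1 : Φ t - Φ (t - s) = ∫ u in (t-s)..t, f u := by
      rw [hΦdef]; simp only
      rw [intervalIntegral.integral_interval_sub_left (hf.intervalIntegrable _ _)
        (hf.intervalIntegrable _ _)]
    rw [h1]
    have := intervalIntegral.norm_integral_le_of_norm_le_const
      (a := t - s) (b := t) (C := M) (f := f) (fun x _ => by simpa using hfb x)
    simpa [abs_sub_comm] using this
  set F : ℝ → ℝ → ℝ := fun t s => K s * (Φ t - Φ (t - s)) with hFdef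
  set F' : ℝ → ℝ → ℝ := fun t s => K s * (f t - f (t - s)) with hF'def
  have hmeasK : AEStronglyMeasurable K (volume.restrict (Set.Ioi 0)) :=
    hKint.aestronglyMeasurable
  have hFmeas : ∀ t, AEStronglyMeasurable (F t) (volume.restrict (Set.Ioi 0)) := by
    intro t
    exact hmeasK.mul (Continuous.aestronglyMeasurable (by fun_prop))
  have hF'meas : ∀ t, AEStronglyMeasurable (F' t) (volume.restrict (Set.Ioi 0)) := by
    intro t
    exact hmeasK.mul (Continuous.aestronglyMeasurable (by fun_prop))
  -- a.e. s in Ioi 0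
  have haepos : ∀ᵐ s ∂(volume.restrict (Set.Ioi (0:ℝ))), 0 < s :=
    (ae_restrict_iff' measurableSet_Ioi).2 (Filter.Eventually.of_forall fun s hs => hs)
  have hFbound : ∀ t, ∀ᵐ s ∂(volume.restrict (Set.Ioi (0:ℝ))), ‖F t s‖ ≤ M * (s * K s) := by
    intro t
    filter_upwards [haepos] with s hs
    have hKs := hK0 s hs.le
    have : ‖F t s‖ = K s * |Φ t - Φ (t - s)| := by
      rw [hFdef]; simp only [Real.norm_eq_abs, abs_mul, abs_of_nonneg hKs]
    rw [this]
    calc K s * |Φ t - Φ (t - s)| ≤ K s * (M * |s|) :=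
          mul_le_mul_of_nonneg_left (hΦsub t s) hKs
      _ = M * (s * K s) := by rw [abs_of_nonneg hs.le]; ring
  have hMsK : Integrable (fun s => M * (s * K s)) (volume.restrict (Set.Ioi 0)) :=
    hsK.const_mul M
  have hFint : ∀ t, Integrable (F t) (volume.restrict (Set.Ioi 0)) := by
    intro t
    exact Integrable.mono' hMsK (hFmeas t) (hFbound t)
  have hPbd : ∀ t, |∫ s in Set.Ioi (0:ℝ), F t s| ≤ M * ∫ s in Set.Ioi (0:ℝ), s * K s := by
    intro t
    have := norm_integral_le_of_norm_le hMsK (hFbound t)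
    rw [integral_const_mul] at this
    simpa [Real.norm_eq_abs] using this
  have hbound : Integrable (fun s => |K s| * (2 * M)) (volume.restrict (Set.Ioi 0)) :=
    hKint.abs.mul_const _
  have hder : ∀ t₀, HasDerivAt (fun t => ∫ s in Set.Ioi (0:ℝ), F t s)
      (∫ s in Set.Ioi (0:ℝ), F' t₀ s) t₀ := by
    intro t₀
    have := hasDerivAt_integral_of_dominated_loc_of_deriv_le (F := F) (F' := F')
      (x₀ := t₀) (s := Metric.ball t₀ 1) (bound := fun s => |K s| * (2 * M)) (Metric.ball_mem_nhds t₀ one_pos)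
      (Filter.Eventually.of_forall fun t => hFmeas t) (hFint t₀) (hF'meas t₀)
      ?_ hbound ?_
    · exact this.2
    · refine Filter.Eventually.of_forall fun s => fun t _ => ?_
      have : ‖F' t s‖ = |K s| * |f t - f (t - s)| := by
        rw [hF'def]; simp [Real.norm_eq_abs, abs_mul]
      rw [this]
      refine mul_le_mul_of_nonneg_left ?_ (abs_nonneg _)
      calc |f t - f (t - s)| ≤ |f t| + |f (t - s)| := abs_sub _ _
        _ ≤ M + M := add_le_add (hfb t) (hfb _)
        _ = 2 * M := by ring
    · refine Filter.Eventually.of_forall fun s => fun t _ => ?_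
      have h1 : HasDerivAt (fun t => Φ (t - s)) (f (t - s)) t := by
        have := (hΦ (t - s)).comp t ((hasDerivAt_id t).sub_const s)
        exact HasDerivAt.comp_sub_const t s (hΦ (t - s))
      exact ((hΦ t).sub h1).const_mul (K s)
  refine ⟨fun t => ∫ s in Set.Ioi (0:ℝ), F t s, hPbd, ?_⟩
  intro t
  have hKf : Integrable (fun s => K s * f (t - s)) (volume.restrict (Set.Ioi 0)) := by
    refine Integrable.mono' (hKint.abs.mul_const M)
      (hmeasK.mul (Continuous.aestronglyMeasurable (by fun_prop)))
      (Filter.Eventually.of_forall fun s => ?_)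
    calc ‖K s * f (t - s)‖ = |K s| * |f (t - s)| := abs_mul _ _
      _ ≤ |K s| * M := mul_le_mul_of_nonneg_left (hfb _) (abs_nonneg _)
  have hKft : Integrable (fun s => K s * f t) (volume.restrict (Set.Ioi 0)) :=
    hKint.mul_const _
  have heq : (∫ s in Set.Ioi (0:ℝ), F' t s)
      = (∫ s in Set.Ioi (0:ℝ), K s) * f t - ∫ s in Set.Ioi (0:ℝ), K s * f (t - s) := by
    rw [hF'def]
    simp only [mul_sub]
    rw [integral_sub hKft hKf, integral_mul_const]
  rw [← heq]
  exact hder t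

theorem statement12 (n p : ℕ) (hp1 : 1 ≤ p) (hpn : p < n)
    (b : Fin n → ℝ) (a : Fin n → Fin n → ℝ)
    (μ c d e : Fin n → ℝ) (K : Fin n → Fin n → ℝ → ℝ) (G : Fin n → ℝ → ℝ)
    (hH0 : H0 n μ c d e K G)
    (q : Fin n) (hq : p ≤ (q : ℕ))
    (α : Fin n → ℝ)
    (hαnn : ∀ i : Fin n, (i : ℕ) < p → 0 ≤ α i)
    (h1 : 0 < (∑ i ∈ Finset.univ.filter (fun i : Fin n => (i : ℕ) < p),
        α i * b i) - b q)
    (h2 : ∀ j : Fin n, (j : ℕ) < p →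
      (∑ i ∈ Finset.univ.filter (fun i : Fin n => (i : ℕ) < p),
        α i * ((if i = j then μ i + c i * d i / e i else 0) + a i j)) - a q j ≤ 0)
    (h3 : ∀ j : Fin n, p ≤ (j : ℕ) →
      (∑ i ∈ Finset.univ.filter (fun i : Fin n => (i : ℕ) < p),
        α i * a i j) - ((if q = j then μ q + c q * d q / e q else 0) + a q j) ≤ 0)
    (h0 : (∀ i : Fin n, (i : ℕ) < p → α i = 0) → 0 < μ q - max 0 (-(a q q))) :
    ∀ x u : Fin n → ℝ → ℝ, IsPositiveSolution n b a μ c d e K G x u →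
      (∀ i, ∃ C, ∀ t, (0:ℝ) ≤ t → x i t ≤ C ∧ u i t ≤ C) →
      (∃ η > (0:ℝ), ∃ C > (0:ℝ), ∀ t, (0:ℝ) ≤ t →
          x q t ≤ C * Real.exp (-η * t)) ∧
      MeasureTheory.IntegrableOn (fun t => (x q t) ^ 2) (Set.Ici 0) ∧
      Filter.Tendsto (x q) Filter.atTop (nhds 0) := by
  obtain ⟨hμ, hc, hd, he, hK0, hG0, hKint, hGint, hK1, hG1, hsK, hsG⟩ := hH0
  intro x u hsol hbdd
  obtain ⟨hxc, huc, hx0, hu0, hxb0, hub0, hxpos, hupos, hxode, huode⟩ := hsol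
  have hxnn : ∀ i t, 0 ≤ x i t := fun i t => by
    rcases le_or_gt t 0 with h|h
    · exact hx0 i t h
    · exact (hxpos i t h.le).le
  have hunn : ∀ i t, 0 ≤ u i t := fun i t => by
    rcases le_or_gt t 0 with h|h
    · exact hu0 i t h
    · exact (hupos i t h.le).le
  -- global bounds
  have hMex : ∀ i, ∃ M, ∀ t, |x i t| ≤ M ∧ |u i t| ≤ M := by
    intro i
    obtain ⟨C1, hC1⟩ := hbdd i
    obtain ⟨C2, hC2⟩ := hxb0 i
    obtain ⟨C3, hC3⟩ := hub0 i
    refine ⟨max C1 (max C2 C3), fun t => ⟨?_, ?_⟩⟩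
    · rw [abs_of_nonneg (hxnn i t)]
      rcases le_or_gt t 0 with h|h
      · exact le_trans (hC2 t h) (le_trans (le_max_left _ _) (le_max_right _ _))
      · exact le_trans ((hC1 t h.le).1) (le_max_left _ _)
    · rw [abs_of_nonneg (hunn i t)]
      rcases le_or_gt t 0 with h|h
      · exact le_trans (hC3 t h) (le_trans (le_max_right _ _) (le_max_right _ _))
      · exact le_trans ((hC1 t h.le).2) (le_max_left _ _)
  choose M hM using hMex
  have hMpos : ∀ i, 0 < M i := fun i =>
    lt_of_lt_of_le (hxpos i 0 le_rfl) (le_trans (le_abs_self _) ((hM i 0).1))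
  -- delay correction functions
  have hPex : ∀ i j, ∃ P : ℝ → ℝ,
      (∀ t, |P t| ≤ M j * ∫ s in Set.Ioi (0:ℝ), s * K i j s) ∧
      (∀ t, HasDerivAt P ((∫ s in Set.Ioi (0:ℝ), K i j s) * x j t
          - ∫ s in Set.Ioi (0:ℝ), K i j s * x j (t - s)) t) :=
    fun i j => delay_aux (x j) (K i j) (M j) (hxc j) (fun t => (hM j t).1)
      (hK0 i j) (hKint i j) (hsK i j)
  choose P hPbd hPder using hPex
  have hQex : ∀ i, ∃ Q : ℝ → ℝ,
      (∀ t, |Q t| ≤ M i * ∫ s in Set.Ioi (0:ℝ), s * G i s) ∧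
      (∀ t, HasDerivAt Q ((∫ s in Set.Ioi (0:ℝ), G i s) * u i t
          - ∫ s in Set.Ioi (0:ℝ), G i s * u i (t - s)) t) :=
    fun i => delay_aux (u i) (G i) (M i) (huc i) (fun t => (hM i t).2)
      (hG0 i) (hGint i) (hsG i)
  choose Q hQbd hQder using hQex
  set lam : Fin n → ℝ := fun i => μ i + c i * d i / e i with hlam
  set S : Fin n → ℝ → ℝ := fun i t => Real.log (x i t)
      - (∑ j, a i j * P i j t) - c i / e i * u i t - c i * Q i t with hSdef
  have key : ∀ i t, 0 < t →
      HasDerivAt (S i) (b i - lam i * x i t - ∑ j, a i j * x j t) t := by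
    intro i t ht
    have hx := hxpos i t ht.le
    have hlog : HasDerivAt (fun τ => Real.log (x i τ))
        (b i - μ i * x i t
          - (∑ j, a i j * ∫ s in Set.Ioi (0:ℝ), K i j s * x j (t - s))
          - c i * ∫ s in Set.Ioi (0:ℝ), G i s * u i (t - s)) t := by
      have := (hxode i t ht).log hx.ne'
      rwa [mul_div_cancel_left₀ _ hx.ne'] at this
    have hPd : ∀ j, HasDerivAt (P i j)
        (x j t - ∫ s in Set.Ioi (0:ℝ), K i j s * x j (t - s)) t := by
      intro j; have := hPder i j t; rwa [hK1 i j, one_mul] at this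
    have hQd : HasDerivAt (Q i)
        (u i t - ∫ s in Set.Ioi (0:ℝ), G i s * u i (t - s)) t := by
      have := hQder i t; rwa [hG1 i, one_mul] at this
    have hsum : HasDerivAt (fun τ => ∑ j, a i j * P i j τ)
        (∑ j, a i j * (x j t - ∫ s in Set.Ioi (0:ℝ), K i j s * x j (t - s))) t :=
      HasDerivAt.fun_sum (fun j _ => (hPd j).const_mul (a i j))
    have hres := ((((hlog.sub hsum)).sub ((huode i t ht).const_mul (c i / e i))).sub
      (hQd.const_mul (c i)))
    refine hres.congr_deriv (Eq.symm ?_)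
    have hei := (he i).ne'
    simp only [mul_sub, Finset.sum_sub_distrib, hlam]
    field_simp
    ring
  set filp := Finset.univ.filter (fun i : Fin n => (i : ℕ) < p) with hfilp
  set γ := (∑ i ∈ filp, α i * b i) - b q with hγ
  have hγpos : 0 < γ := h1
  set V : ℝ → ℝ := fun t => (∑ i ∈ filp, α i * S i t) - S q t with hVdef
  set cj : Fin n → ℝ := fun j =>
    (∑ i ∈ filp, α i * ((if i = j then lam i else 0) + a i j))
      - ((if q = j then lam q else 0) + a q j) with hcjdef
  have hcj : ∀ j, cj j ≤ 0 := by
    intro j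
    rcases lt_or_ge (j : ℕ) p with hj | hj
    · have hqj : q ≠ j := by
        intro hqj; rw [hqj] at hq; omega
      have := h2 j hj
      simpa [hcjdef, if_neg hqj] using this
    · have := h3 j hj
      have heq : (∑ i ∈ filp, α i * ((if i = j then lam i else 0) + a i j))
          = ∑ i ∈ filp, α i * a i j := by
        refine Finset.sum_congr rfl fun i hi => ?_
        have hip : (i : ℕ) < p := (Finset.mem_filter.1 hi).2
        have : i ≠ j := by intro h; rw [h] at hip; omega
        rw [if_neg this, zero_add]
      simpa [hcjdef, heq] using this
  have hVder : ∀ t, 0 < t → HasDerivAt V (γ - ∑ j, cj j * x j t) t := by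
    intro t ht
    have hs : HasDerivAt (fun τ => ∑ i ∈ filp, α i * S i τ)
        (∑ i ∈ filp, α i * (b i - lam i * x i t - ∑ j, a i j * x j t)) t :=
      HasDerivAt.fun_sum (fun i _ => (key i t ht).const_mul (α i))
    have := hs.sub (key q t ht)
    refine this.congr_deriv (Eq.symm ?_)
    have T2eq : (∑ j, ((if q = j then lam q else 0) + a q j) * x j t)
        = lam q * x q t + ∑ j, a q j * x j t := by
      simp [add_mul, Finset.sum_add_distrib, ite_mul, Finset.sum_ite_eq]
    have T1eq : (∑ j, (∑ i ∈ filp, α i * ((if i = j then lam i else 0) + a i j)) * x j t)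
        = ∑ i ∈ filp, (α i * (lam i * x i t) + α i * ∑ j, a i j * x j t) := by
      have hstep : ∀ j : Fin n,
          (∑ i ∈ filp, α i * ((if i = j then lam i else 0) + a i j)) * x j t
          = ∑ i ∈ filp, α i * ((if i = j then lam i else 0) + a i j) * x j t :=
        fun j => Finset.sum_mul _ _ _
      rw [Finset.sum_congr rfl fun j _ => hstep j, Finset.sum_comm]
      refine Finset.sum_congr rfl fun i _ => ?_
      simp [add_mul, mul_add, ite_mul, mul_ite, Finset.sum_add_distrib,
        Finset.sum_ite_eq, Finset.mul_sum, mul_assoc]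
    rw [hγ, hcjdef]
    simp only [sub_mul, Finset.sum_sub_distrib]
    rw [T1eq, T2eq]
    simp only [mul_sub, Finset.sum_sub_distrib, Finset.sum_add_distrib, mul_add]
    ring
  -- continuity of V on [0,∞)
  have hPc : ∀ i j, Continuous (P i j) := fun i j =>
    continuous_iff_continuousAt.2 fun t => (hPder i j t).continuousAt
  have hQc : ∀ i, Continuous (Q i) := fun i =>
    continuous_iff_continuousAt.2 fun t => (hQder i t).continuousAt
  have hScont : ∀ i, ContinuousOn (S i) (Set.Ici 0) := by
    intro i
    have hlog : ContinuousOn (fun t => Real.log (x i t)) (Set.Ici 0) :=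
      ContinuousOn.log (hxc i).continuousOn (fun t ht => (hxpos i t ht).ne')
    exact ((hlog.sub ((continuous_finset_sum Finset.univ fun j _ =>
      (continuous_const.mul (hPc i j))).continuousOn)).sub
      ((continuous_const.mul (huc i)).continuousOn)).sub
      ((continuous_const.mul (hQc i)).continuousOn)
  have hVcont : ContinuousOn V (Set.Ici 0) := by
    refine ContinuousOn.sub ?_ (hScont q)
    exact continuousOn_finset_sum filp fun i _ => (hScont i).const_smul (α i) |>.congr
      (fun t _ => by simp [smul_eq_mul])
  have hmono : MonotoneOn (fun t => V t - γ * t) (Set.Ici 0) := by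
    refine monotoneOn_of_deriv_nonneg (convex_Ici 0) ?_ ?_ ?_
    · exact hVcont.sub ((continuous_const.mul continuous_id).continuousOn)
    · intro t ht
      rw [interior_Ici] at ht
      exact (((hVder t ht).sub ((hasDerivAt_id t).const_mul γ)).differentiableAt).differentiableWithinAt
    · intro t ht
      rw [interior_Ici] at ht
      have hD : HasDerivAt (fun t => V t - γ * t) ((γ - ∑ j, cj j * x j t) - γ * 1) t :=
        (hVder t ht).sub ((hasDerivAt_id t).const_mul γ)
      rw [hD.deriv]
      have hns : ∑ j, cj j * x j t ≤ 0 :=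
        Finset.sum_nonpos fun j _ => mul_nonpos_of_nonpos_of_nonneg (hcj j) (hxnn j t)
      linarith
  have hVgrow : ∀ t, 0 ≤ t → V 0 + γ * t ≤ V t := by
    intro t ht
    have := hmono Set.self_mem_Ici (Set.mem_Ici.2 ht) ht
    simp only [mul_zero, sub_zero] at this
    linarith
  -- bounds on the correction terms
  set Bc : Fin n → ℝ := fun i => (∑ j, |a i j| * (M j * ∫ s in Set.Ioi (0:ℝ), s * K i j s))
      + |c i / e i| * M i + |c i| * (M i * ∫ s in Set.Ioi (0:ℝ), s * G i s) with hBc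
  have hcorr : ∀ i t, |(∑ j, a i j * P i j t) + c i / e i * u i t + c i * Q i t| ≤ Bc i := by
    intro i t
    have e1 : |∑ j, a i j * P i j t| ≤ ∑ j, |a i j| * (M j * ∫ s in Set.Ioi (0:ℝ), s * K i j s) := by
      refine le_trans (Finset.abs_sum_le_sum_abs _ _) (Finset.sum_le_sum fun j _ => ?_)
      rw [abs_mul]
      exact mul_le_mul_of_nonneg_left (hPbd i j t) (abs_nonneg _)
    have e2 : |c i / e i * u i t| ≤ |c i / e i| * M i := by
      rw [abs_mul]
      exact mul_le_mul_of_nonneg_left (hM i t).2 (abs_nonneg _)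
    have e3 : |c i * Q i t| ≤ |c i| * (M i * ∫ s in Set.Ioi (0:ℝ), s * G i s) := by
      rw [abs_mul]
      exact mul_le_mul_of_nonneg_left (hQbd i t) (abs_nonneg _)
    calc |(∑ j, a i j * P i j t) + c i / e i * u i t + c i * Q i t|
        ≤ |(∑ j, a i j * P i j t) + c i / e i * u i t| + |c i * Q i t| := abs_add_le _ _
      _ ≤ (|∑ j, a i j * P i j t| + |c i / e i * u i t|) + |c i * Q i t| :=
          add_le_add_left (abs_add_le _ _) _
      _ ≤ Bc i := by rw [hBc]; exact add_le_add (add_le_add e1 e2) e3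
  have hSid : ∀ i t, S i t = Real.log (x i t)
      - ((∑ j, a i j * P i j t) + c i / e i * u i t + c i * Q i t) := by
    intro i t; simp only [hSdef]; ring
  have hSub : ∀ i t, S i t ≤ Real.log (x i t) + Bc i := by
    intro i t
    have h := abs_le.1 (hcorr i t)
    rw [hSid i t]; linarith [h.1]
  have hSlb : ∀ i t, Real.log (x i t) ≤ S i t + Bc i := by
    intro i t
    have h := abs_le.1 (hcorr i t)
    rw [hSid i t]; linarith [h.2]
  set A : ℝ := (∑ i ∈ filp, α i * (Real.log (M i) + Bc i)) - V 0 + Bc q with hA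
  have hfinal : ∀ t, 0 ≤ t → x q t ≤ Real.exp A * Real.exp (-γ * t) := by
    intro t ht
    have h4 := hSlb q t
    have h5 : S q t = (∑ i ∈ filp, α i * S i t) - V t := by
      simp only [hVdef]; ring
    have h7 : (∑ i ∈ filp, α i * S i t) ≤ ∑ i ∈ filp, α i * (Real.log (M i) + Bc i) := by
      refine Finset.sum_le_sum fun i hi => ?_
      have hαi := hαnn i (Finset.mem_filter.1 hi).2
      refine mul_le_mul_of_nonneg_left ?_ hαi
      refine le_trans (hSub i t) ?_
      have : Real.log (x i t) ≤ Real.log (M i) :=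
        Real.log_le_log (hxpos i t ht) (le_trans (le_abs_self _) (hM i t).1)
      linarith
    have h8 := hVgrow t ht
    have h9 : Real.log (x q t) ≤ A - γ * t := by rw [hA]; rw [h5] at h4; linarith
    calc x q t = Real.exp (Real.log (x q t)) := (Real.exp_log (hxpos q t ht)).symm
      _ ≤ Real.exp A * Real.exp (-γ * t) := by
          rw [← Real.exp_add]
          exact Real.exp_le_exp.2 (by linarith)
  refine ⟨⟨γ, hγpos, Real.exp A, Real.exp_pos A, fun t ht => hfinal t ht⟩, ?_, ?_⟩
  · -- L² on [0,∞)
    have hdom : IntegrableOn (fun t => (Real.exp A)^2 * Real.exp (-(2*γ) * t)) (Set.Ici 0) := by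
      rw [integrableOn_Ici_iff_integrableOn_Ioi]
      exact (exp_neg_integrableOn_Ioi 0 (by linarith)).const_mul _
    refine Integrable.mono' hdom ((hxc q).pow 2).aestronglyMeasurable.restrict ?_
    rw [ae_restrict_iff' measurableSet_Ici]
    refine Filter.Eventually.of_forall fun t ht => ?_
    have h := hfinal t ht
    have hxq := hxnn q t
    have hn : ‖(x q t)^2‖ = (x q t)^2 := by
      rw [Real.norm_eq_abs, abs_of_nonneg (by positivity)]
    rw [hn]
    calc (x q t)^2 ≤ (Real.exp A * Real.exp (-γ * t))^2 := by nlinarith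
      _ = (Real.exp A)^2 * Real.exp (-(2*γ) * t) := by
          rw [mul_pow]
          congr 1
          rw [sq, ← Real.exp_add]
          congr 1
          ring
  · -- convergence to 0
    have h1 : Tendsto (fun t : ℝ => γ * t) atTop atTop :=
      Tendsto.const_mul_atTop hγpos tendsto_id
    have h2 : Tendsto (fun t : ℝ => -(γ * t)) atTop atBot :=
      tendsto_neg_atTop_atBot.comp h1
    have hg : Tendsto (fun t => Real.exp A * Real.exp (-γ * t)) atTop (𝓝 0) := by
      have h3 := (Real.tendsto_exp_atBot.comp h2).const_mul (Real.exp A)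
      simp only [mul_zero] at h3
      refine h3.congr fun t => ?_
      simp [Function.comp, neg_mul]
    refine squeeze_zero' (Filter.Eventually.of_forall fun t => hxnn q t) ?_ hg
    filter_upwards [Filter.eventually_ge_atTop (0:ℝ)] with t ht
    exact hfinal t ht

end
end

section
/- Let M = [δ_{ij} λ_i + a_{ij}] be a P-matrix and let p ∈ {1,…,n−1}. There exists a vector x* = (x_1*,…,x_p*,0,…,0) ∈ ℝ^n with x_i* > 0 for i = 1,…,p such that (M x*)_i = b_i for i = 1,…,p and (M x*)_q ≥ b_q for q = p+1,…,n (i.e., x* determines a saturated equilibrium of the system whose last n−p components vanish) if and only if R_i^p > 0 for all i = 1,…,p and R_q^{p+1,q} ≤ 0 for all q = p+1,…,n. In this case x_i* = R_i^p / R_0^p for i = 1,…,p, and b_q ≤ Σ_{j=1}^p a_{qj} x_j* for q = p+1,…,n. -/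
open MeasureTheory Filter Topology

noncomputable section

/-- The `p×p` leading principal block `[δ_ij λ_i + a_ij]` (indices `1,…,p`). -/
def Mp (n p : ℕ) (hpn : p ≤ n) (lam : Fin n → ℝ) (a : Fin n → Fin n → ℝ) :
    Matrix (Fin p) (Fin p) ℝ :=
  Matrix.of fun i j =>
    (if i = j then lam (Fin.castLE hpn i) else 0) +
      a (Fin.castLE hpn i) (Fin.castLE hpn j)

/-- `R_0^p`: the determinant of the `p×p` leading principal block. -/
def R0p (n p : ℕ) (hpn : p ≤ n) (lam : Fin n → ℝ) (a : Fin n → Fin n → ℝ) : ℝ :=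
  (Mp n p hpn lam a).det

/-- `R_i^p`: the determinant of the `p×p` block with column `i` replaced by
`(b_1,…,b_p)`. -/
def Rip (n p : ℕ) (hpn : p ≤ n) (lam : Fin n → ℝ) (a : Fin n → Fin n → ℝ)
    (b : Fin n → ℝ) (i : Fin p) : ℝ :=
  ((Mp n p hpn lam a).updateCol i (fun k => b (Fin.castLE hpn k))).det

/-- The `(p+1)×(p+1)` matrix whose determinant is `R_q^{p+1,q}`. -/
def Rqmat (n p : ℕ) (hpn : p < n) (lam : Fin n → ℝ) (a : Fin n → Fin n → ℝ)
    (b : Fin n → ℝ) (q : Fin n) : Matrix (Fin (p + 1)) (Fin (p + 1)) ℝ :=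
  Matrix.of fun i j =>
    if hi : (i : ℕ) < p then
      if hj : (j : ℕ) < p then
        (if (i : ℕ) = (j : ℕ) then lam ⟨i, hi.trans hpn⟩ else 0) +
          a ⟨i, hi.trans hpn⟩ ⟨j, hj.trans hpn⟩
      else b ⟨i, hi.trans hpn⟩
    else
      if hj : (j : ℕ) < p then a q ⟨j, hj.trans hpn⟩ else b q

open Matrix in
/-- A leading principal minor of a P-matrix is positive. -/
lemma detMp_pos (n p : ℕ) (hp1 : 1 ≤ p) (hpn : p ≤ n) (lam : Fin n → ℝ)
    (a : Fin n → Fin n → ℝ)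
    (hP : IsPMatrix (Matrix.of fun i j : Fin n =>
      (if i = j then lam i else 0) + a i j)) :
    0 < (Mp n p hpn lam a).det := by
  set B : Matrix (Fin n) (Fin n) ℝ :=
    Matrix.of fun i j : Fin n => (if i = j then lam i else 0) + a i j with hB
  set S : Finset (Fin n) := Finset.univ.map (Fin.castLEEmb hpn) with hS
  have hSne : S.Nonempty := by
    refine ⟨Fin.castLE hpn ⟨0, hp1⟩, ?_⟩
    simp only [hS, Finset.mem_map, Finset.mem_univ, true_and]
    exact ⟨⟨0, hp1⟩, rfl⟩
  have h := hP S hSne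
  let e : Fin p ≃ {y // y ∈ S} :=
    { toFun := fun i => ⟨Fin.castLE hpn i, by simp [hS]⟩
      invFun := fun y => ⟨(y : Fin n), by
        obtain ⟨y, hy⟩ := y
        simp only [hS, Finset.mem_map, Finset.mem_univ, true_and] at hy
        obtain ⟨i, hi⟩ := hy
        simp [← hi]⟩
      left_inv := fun i => by ext; simp
      right_inv := fun y => by ext; simp }
  have hdet : (Mp n p hpn lam a).det =
      (B.submatrix (fun i : {y // y ∈ S} => (i : Fin n))
        (fun j : {y // y ∈ S} => (j : Fin n))).det := by
    rw [← Matrix.det_submatrix_equiv_self e]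
    congr 1
    ext i j
    simp only [Matrix.submatrix_apply, Mp, Matrix.of_apply, hB, e]
    congr 2
    simp [Fin.castLE, Fin.ext_iff]
  rw [hdet]; exact h

/-- The index equivalence `Fin (p+1) ≃ Fin p ⊕ Fin 1`. -/
def eqvP (p : ℕ) : Fin (p + 1) ≃ (Fin p ⊕ Fin 1) where
  toFun i := if h : (i : ℕ) < p then Sum.inl ⟨i, h⟩ else Sum.inr 0
  invFun := Sum.elim (fun j => ⟨j, j.isLt.trans (Nat.lt_succ_self p)⟩)
    (fun _ => ⟨p, Nat.lt_succ_self p⟩)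
  left_inv i := by
    by_cases h : (i : ℕ) < p <;> simp [h, Fin.ext_iff]
    omega
  right_inv s := by
    rcases s with j | z
    · simp [j.isLt]
    · simp only [Sum.elim_inr]
      refine (dif_neg (lt_irrefl p)).trans ?_
      exact congrArg Sum.inr (Subsingleton.elim _ _)

open Matrix in
/-- Schur-complement formula for the determinant of `Rqmat`. -/
lemma rq_schur (n p : ℕ) (hpn : p < n) (lam : Fin n → ℝ) (a : Fin n → Fin n → ℝ)
    (b : Fin n → ℝ) (q : Fin n) (hu : IsUnit (Mp n p hpn.le lam a).det) :
    (Rqmat n p hpn lam a b q).det =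
      (Mp n p hpn.le lam a).det *
        (b q - ∑ j : Fin p, a q (Fin.castLE hpn.le j) *
          ((Mp n p hpn.le lam a)⁻¹ *ᵥ (fun k => b (Fin.castLE hpn.le k))) j) := by
  set M := Mp n p hpn.le lam a with hM
  set Bp : Matrix (Fin p) (Fin 1) ℝ := fun i _ => b (Fin.castLE hpn.le i) with hBp
  set Cq : Matrix (Fin 1) (Fin p) ℝ := fun _ j => a q (Fin.castLE hpn.le j) with hCq
  set Dq : Matrix (Fin 1) (Fin 1) ℝ := fun _ _ => b q with hDq
  have hre : Rqmat n p hpn lam a b q =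
      (Matrix.fromBlocks M Bp Cq Dq).submatrix (eqvP p) (eqvP p) := by
    ext i j
    simp only [Matrix.submatrix_apply, Rqmat, Matrix.of_apply, eqvP, Equiv.coe_fn_mk]
    by_cases hi : (i : ℕ) < p <;> by_cases hj : (j : ℕ) < p <;>
      simp only [hi, hj, dif_pos, dif_neg, not_false_iff, dite_true, dite_false,
        Matrix.fromBlocks_apply₁₁, Matrix.fromBlocks_apply₁₂, Matrix.fromBlocks_apply₂₁,
        Matrix.fromBlocks_apply₂₂, hM, hBp, hCq, hDq, Mp, Matrix.of_apply]
    · congr 1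
      simp [Fin.ext_iff, Fin.castLE]
    · rfl
    · rfl
    · rfl
  have := Matrix.invertibleOfIsUnitDet M hu
  have hschur := Matrix.det_fromBlocks₁₁ M Bp Cq Dq
  rw [hre, Matrix.det_submatrix_equiv_self, hschur, Matrix.invOf_eq_nonsing_inv]
  congr 1
  rw [Matrix.det_fin_one]
  change (Dq - Cq * M⁻¹ * Bp) 0 0 = _
  rw [Matrix.sub_apply, Matrix.mul_assoc, Matrix.mul_apply]
  simp only [Matrix.sub_apply, hDq, Matrix.mul_assoc, Matrix.mul_apply, hCq, hBp,
    Matrix.mulVec, dotProduct]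
  rfl

open Matrix in
theorem statement17 (n p : ℕ) (hp1 : 1 ≤ p) (hpn : p < n)
    (lam b : Fin n → ℝ) (a : Fin n → Fin n → ℝ)
    (hP : IsPMatrix (Matrix.of fun i j : Fin n =>
      (if i = j then lam i else 0) + a i j)) :
    ((∃ xs : Fin n → ℝ, (∀ i : Fin n, (i : ℕ) < p → 0 < xs i) ∧
        (∀ i : Fin n, p ≤ (i : ℕ) → xs i = 0) ∧
        (∀ i : Fin n, (i : ℕ) < p →
          lam i * xs i + (∑ j, a i j * xs j) = b i) ∧
        (∀ q : Fin n, p ≤ (q : ℕ) →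
          b q ≤ lam q * xs q + ∑ j, a q j * xs j)) ↔
      ((∀ i : Fin p, 0 < Rip n p hpn.le lam a b i) ∧
        ∀ q : Fin n, p ≤ (q : ℕ) → (Rqmat n p hpn lam a b q).det ≤ 0)) ∧
    (∀ xs : Fin n → ℝ, (∀ i : Fin n, (i : ℕ) < p → 0 < xs i) →
      (∀ i : Fin n, p ≤ (i : ℕ) → xs i = 0) →
      (∀ i : Fin n, (i : ℕ) < p →
        lam i * xs i + (∑ j, a i j * xs j) = b i) →
      (∀ q : Fin n, p ≤ (q : ℕ) →
        b q ≤ lam q * xs q + ∑ j, a q j * xs j) →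
      (∀ i : Fin p, xs (Fin.castLE hpn.le i) =
          Rip n p hpn.le lam a b i / R0p n p hpn.le lam a) ∧
      (∀ q : Fin n, p ≤ (q : ℕ) →
        b q ≤ ∑ j : Fin p, a q (Fin.castLE hpn.le j) * xs (Fin.castLE hpn.le j))) := by
  have hdet : 0 < (Mp n p hpn.le lam a).det := detMp_pos n p hp1 hpn.le lam a hP
  set M := Mp n p hpn.le lam a with hM
  set bp : Fin p → ℝ := fun k => b (Fin.castLE hpn.le k) with hbp
  have hu : IsUnit M.det := hdet.ne'.isUnit
  set xstar : Fin p → ℝ := M⁻¹ *ᵥ bp with hxstar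
  have hMx : M *ᵥ xstar = bp := by
    rw [hxstar, Matrix.mulVec_mulVec, Matrix.mul_nonsing_inv _ hu, Matrix.one_mulVec]
  have hinj : ∀ u v : Fin p → ℝ, M *ᵥ u = M *ᵥ v → u = v := by
    intro u v huv
    have h2 : M⁻¹ *ᵥ (M *ᵥ u) = M⁻¹ *ᵥ (M *ᵥ v) := by rw [huv]
    rwa [Matrix.mulVec_mulVec, Matrix.mulVec_mulVec, Matrix.nonsing_inv_mul _ hu,
      Matrix.one_mulVec, Matrix.one_mulVec] at h2
  have hcram : ∀ i : Fin p, Rip n p hpn.le lam a b i = M.det * xstar i := by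
    intro i
    have h1 : M *ᵥ (Matrix.cramer M bp) = M *ᵥ (M.det • xstar) := by
      rw [Matrix.mulVec_cramer, Matrix.mulVec_smul, hMx]
    have h2 := hinj _ _ h1
    have h3 : Matrix.cramer M bp i = M.det * xstar i := by
      rw [h2]; simp [smul_eq_mul]
    rw [← h3, Matrix.cramer_apply]
    rfl
  -- restriction of a sum over Fin n to Fin p for tail-vanishing vectors
  have hsum : ∀ (i : Fin n) (xs : Fin n → ℝ), (∀ j : Fin n, p ≤ (j : ℕ) → xs j = 0) →
      ∑ j, a i j * xs j =
        ∑ j : Fin p, a i (Fin.castLE hpn.le j) * xs (Fin.castLE hpn.le j) := by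
    intro i xs hz
    have h1 : ∑ j ∈ Finset.univ.map (Fin.castLEEmb hpn.le), a i j * xs j =
        ∑ j : Fin p, a i (Fin.castLE hpn.le j) * xs (Fin.castLE hpn.le j) := by
      rw [Finset.sum_map]
      rfl
    rw [← h1]
    refine (Finset.sum_subset (Finset.subset_univ _) ?_).symm
    intro j _ hj
    have hjp : p ≤ (j : ℕ) := by
      by_contra hc
      push_neg at hc
      exact hj (by
        simp only [Finset.mem_map, Finset.mem_univ, true_and]
        exact ⟨⟨j, hc⟩, by ext; simp [Fin.castLE]⟩)
    rw [hz j hjp, mul_zero]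
  -- formula for one coordinate of `M *ᵥ y`
  have hmvM : ∀ (y : Fin p → ℝ) (k : Fin p), (M *ᵥ y) k =
      lam (Fin.castLE hpn.le k) * y k +
        ∑ j : Fin p, a (Fin.castLE hpn.le k) (Fin.castLE hpn.le j) * y j := by
    intro y k
    simp only [hM, Mp, Matrix.mulVec, dotProduct, Matrix.of_apply, add_mul,
      Finset.sum_add_distrib, ite_mul, zero_mul]
    rw [Finset.sum_ite_eq Finset.univ k (fun j => lam (Fin.castLE hpn.le k) * y j)]
    simp
  -- the component equations are equivalent to a matrix equation
  have hmv : ∀ xs : Fin n → ℝ, (∀ j : Fin n, p ≤ (j : ℕ) → xs j = 0) →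
      ((∀ i : Fin n, (i : ℕ) < p → lam i * xs i + (∑ j, a i j * xs j) = b i) ↔
        M *ᵥ (fun k => xs (Fin.castLE hpn.le k)) = bp) := by
    intro xs hz
    constructor
    · intro heq
      funext k
      rw [hmvM]
      have := heq (Fin.castLE hpn.le k) (by simpa using k.isLt)
      rw [hsum _ xs hz] at this
      exact this
    · intro hme i hi
      have := congrFun hme ⟨i, hi⟩
      rw [hmvM] at this
      rw [hsum i xs hz]
      have hcast : Fin.castLE hpn.le (⟨(i : ℕ), hi⟩ : Fin p) = i := by
        ext; simp [Fin.castLE]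
      rw [hcast] at this
      exact this
  have hschur : ∀ q : Fin n, (Rqmat n p hpn lam a b q).det =
      M.det * (b q - ∑ j : Fin p, a q (Fin.castLE hpn.le j) * xstar j) :=
    fun q => rq_schur n p hpn lam a b q hu
  constructor
  · constructor
    · rintro ⟨xs, hpos, hzero, heq, hge⟩
      have hy : M *ᵥ (fun k => xs (Fin.castLE hpn.le k)) = bp := (hmv xs hzero).mp heq
      have hyx : (fun k => xs (Fin.castLE hpn.le k)) = xstar := by
        apply hinj
        rw [hy, hMx]
      constructor
      · intro i
        rw [hcram i]
        have hxi : 0 < xstar i := by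
          rw [← hyx]
          exact hpos (Fin.castLE hpn.le i) (by simpa using i.isLt)
        exact mul_pos hdet hxi
      · intro q hq
        rw [hschur q]
        have h1 := hge q hq
        rw [hzero q hq, mul_zero, zero_add, hsum q xs hzero] at h1
        have h2 : b q - ∑ j : Fin p, a q (Fin.castLE hpn.le j) * xstar j ≤ 0 := by
          rw [← hyx]
          linarith
        exact mul_nonpos_of_nonneg_of_nonpos hdet.le h2
    · rintro ⟨hRi, hRq⟩
      have hxpos : ∀ i : Fin p, 0 < xstar i := by
        intro i
        have h := hRi i
        rw [hcram i] at h
        by_contra hc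
        push_neg at hc
        exact absurd h (not_lt.mpr (mul_nonpos_of_nonneg_of_nonpos hdet.le hc))
      set xs : Fin n → ℝ := fun i => if h : (i : ℕ) < p then xstar ⟨i, h⟩ else 0
        with hxs
      have hzero' : ∀ j : Fin n, p ≤ (j : ℕ) → xs j = 0 := by
        intro j hj
        rw [hxs]
        exact dif_neg (by omega)
      have hres : (fun k : Fin p => xs (Fin.castLE hpn.le k)) = xstar := by
        funext k
        rw [hxs]
        simp only
        rw [dif_pos (by simpa using k.isLt)]
        exact congrArg xstar (by ext; simp)
      refine ⟨xs, ?_, hzero', ?_, ?_⟩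
      · intro i hi
        rw [hxs]
        simp only
        rw [dif_pos hi]
        exact hxpos _
      · refine (hmv xs hzero').mpr ?_
        rw [hres]
        exact hMx
      · intro q hq
        have h := hRq q hq
        rw [hschur q] at h
        have h2 : b q ≤ ∑ j : Fin p, a q (Fin.castLE hpn.le j) * xstar j := by
          by_contra hc
          push_neg at hc
          exact absurd h (not_le.mpr (mul_pos hdet (by linarith)))
        rw [hzero' q hq, mul_zero, zero_add, hsum q xs hzero',
          show (∑ j : Fin p, a q (Fin.castLE hpn.le j) * xs (Fin.castLE hpn.le j)) =
            ∑ j : Fin p, a q (Fin.castLE hpn.le j) * xstar j by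
              refine Finset.sum_congr rfl fun j _ => ?_
              rw [congrFun hres j]]
        exact h2
  · intro xs hpos hzero heq hge
    have hy : M *ᵥ (fun k => xs (Fin.castLE hpn.le k)) = bp := (hmv xs hzero).mp heq
    have hyx : (fun k => xs (Fin.castLE hpn.le k)) = xstar := by
      apply hinj
      rw [hy, hMx]
    constructor
    · intro i
      have h1 : xs (Fin.castLE hpn.le i) = xstar i := congrFun hyx i
      have h2 : R0p n p hpn.le lam a = M.det := rfl
      rw [h1, h2, hcram i, mul_div_cancel_left₀ _ hdet.ne']
    · intro q hq
      have h1 := hge q hq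
      rw [hzero q hq, mul_zero, zero_add, hsum q xs hzero] at h1
      exact h1

end
end

section
/- Let M be an n×n real P-matrix and b ∈ ℝ^n. Then there exists a unique vector x* ∈ ℝ^n with x* ≥ 0 such that for each i = 1,…,n, either x_i* > 0 and (M x*)_i = b_i, or x_i* = 0 and (M x*)_i ≥ b_i. Consequently, when M = [δ_{ij} λ_i + a_{ij}] is the controlled community matrix (with λ_i = μ_i + c_i d_i/e_i) and u_i* = (d_i/e_i) x_i*, the point (x*, u*) is the unique saturated equilibrium of the controlled Lotka–Volterra system. -/
open MeasureTheory Filter Topology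

noncomputable section

section Aux
open Matrix
variable {m : ℕ}

def pmdet (A : Matrix (Fin m) (Fin m) ℝ) (s : Finset (Fin m)) : ℝ :=
  (A.submatrix (fun i : {y // y ∈ s} => (i : Fin m))
      (fun j : {y // y ∈ s} => (j : Fin m))).det

/-- det of the matrix whose rows on `s` come from `A` and are std basis vectors off `s`. -/
lemma det_rowPW (A : Matrix (Fin m) (Fin m) ℝ) (s : Finset (Fin m)) :
    (Matrix.of (s.piecewise (fun i => A i) (fun i => Pi.single i (1:ℝ)))).det = pmdet A s := by
  classical
  set N : Matrix (Fin m) (Fin m) ℝ :=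
    Matrix.of (s.piecewise (fun i => A i) (fun i => Pi.single i (1:ℝ))) with hN
  let e : {x // x ∈ s} ⊕ {x // x ∉ s} ≃ Fin m := Equiv.sumCompl (· ∈ s)
  have h1 : (N.submatrix e e).det = N.det := Matrix.det_submatrix_equiv_self e N
  have h2 : N.submatrix e e =
      Matrix.fromBlocks
        (A.submatrix (fun i : {y // y ∈ s} => (i : Fin m)) (fun j : {y // y ∈ s} => (j : Fin m)))
        (A.submatrix (fun i : {y // y ∈ s} => (i : Fin m)) (fun j : {y // y ∉ s} => (j : Fin m)))
        0 1 := by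
    ext i j
    cases i with
    | inl i =>
      cases j with
      | inl j =>
        simp [N, e, Matrix.submatrix_apply, Finset.piecewise_eq_of_mem _ _ _ i.2]
      | inr j =>
        simp [N, e, Matrix.submatrix_apply, Finset.piecewise_eq_of_mem _ _ _ i.2]
    | inr i =>
      cases j with
      | inl j =>
        have : (i:Fin m) ≠ (j:Fin m) := by
          intro h; exact i.2 (h ▸ j.2)
        simp [N, e, Matrix.submatrix_apply, Finset.piecewise_eq_of_notMem _ _ _ i.2,
          Pi.single_apply, (Ne.symm this)]
      | inr j =>
        simp [N, e, Matrix.submatrix_apply, Finset.piecewise_eq_of_notMem _ _ _ i.2,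
          Pi.single_apply, Matrix.one_apply, Subtype.ext_iff, eq_comm]
  rw [← h1, h2, Matrix.det_fromBlocks_zero₂₁]
  simp [pmdet]


lemma pmdet_pos {A : Matrix (Fin m) (Fin m) ℝ} (hA : IsPMatrix A) (s : Finset (Fin m)) :
    0 < pmdet A s := by
  rcases s.eq_empty_or_nonempty with rfl | h
  · have : IsEmpty {y : Fin m // y ∈ (∅ : Finset (Fin m))} := by
      constructor; rintro ⟨y, hy⟩; exact absurd hy (Finset.notMem_empty y)
    simp [pmdet, Matrix.det_isEmpty]
  · exact hA s h

/-- Key determinant positivity: rows on `s` are rows of `M` plus a nonneg diagonal term,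
rows off `s` are standard basis vectors. -/
lemma det_pw_add_pos {M : Matrix (Fin m) (Fin m) ℝ} (hM : IsPMatrix M)
    (s : Finset (Fin m)) {d : Fin m → ℝ} (hd : ∀ i ∈ s, 0 ≤ d i) :
    0 < (Matrix.of (s.piecewise (fun i => M i + Pi.single i (d i))
          (fun i => Pi.single i (1:ℝ)))).det := by
  classical
  set u : Fin m → Fin m → ℝ := s.piecewise (fun i => M i) (fun i => Pi.single i (1:ℝ)) with hu
  set v : Fin m → Fin m → ℝ := fun i => if i ∈ s then Pi.single i (d i) else 0 with hv
  have hrows : (s.piecewise (fun i => M i + Pi.single i (d i))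
      (fun i => Pi.single i (1:ℝ))) = u + v := by
    funext i
    by_cases hi : i ∈ s
    · simp [u, v, Finset.piecewise_eq_of_mem _ _ _ hi, hi]
    · simp [u, v, Finset.piecewise_eq_of_notMem _ _ _ hi, hi]
  have hdet : (Matrix.of (u + v)).det
      = ∑ t : Finset (Fin m), (Matrix.of (t.piecewise u v)).det := by
    have := (Matrix.detRowAlternating :
        (Fin m → ℝ) [⋀^Fin m]→ₗ[ℝ] ℝ).toMultilinearMap.map_add_univ u v
    exact this
  rw [hrows, hdet]
  have hterm : ∀ t : Finset (Fin m),
      (Matrix.of (t.piecewise u v)).det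
        = (∏ i ∈ tᶜ, (if i ∈ s then d i else 0)) * pmdet M (t ∩ s) := by
    intro t
    set c : Fin m → ℝ := fun i => if i ∈ t then 1 else (if i ∈ s then d i else 0) with hc
    set w : Fin m → Fin m → ℝ := (t ∩ s).piecewise (fun i => M i)
        (fun i => Pi.single i (1:ℝ)) with hw
    have hcw : t.piecewise u v = fun i => c i • w i := by
      funext i
      by_cases hit : i ∈ t
      · by_cases his : i ∈ s
        · simp [c, w, u, Finset.piecewise_eq_of_mem _ _ _ hit, hit, his,
            Finset.piecewise_eq_of_mem _ _ _ (Finset.mem_inter.mpr ⟨hit, his⟩)]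
        · have : i ∉ t ∩ s := by simp [his]
          simp [c, w, u, Finset.piecewise_eq_of_mem _ _ _ hit, hit, his,
            Finset.piecewise_eq_of_notMem _ _ _ this]
      · have hnotin : i ∉ t ∩ s := by simp [hit]
        by_cases his : i ∈ s
        · funext j
          simp [c, w, v, Finset.piecewise_eq_of_notMem _ _ _ hit, hit, his,
            Finset.piecewise_eq_of_notMem _ _ _ hnotin, Pi.single_apply,
            mul_ite, ite_smul]
        · simp [c, w, v, Finset.piecewise_eq_of_notMem _ _ _ hit, hit, his,
            Finset.piecewise_eq_of_notMem _ _ _ hnotin]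
    have hsmul : (Matrix.of (fun i => c i • w i)).det = (∏ i, c i) * (Matrix.of w).det := by
      have := (Matrix.detRowAlternating :
          (Fin m → ℝ) [⋀^Fin m]→ₗ[ℝ] ℝ).toMultilinearMap.map_smul_univ c w
      simp only [smul_eq_mul] at this
      exact this
    have hprod : (∏ i, c i) = ∏ i ∈ tᶜ, (if i ∈ s then d i else 0) := by
      rw [← Finset.prod_compl_mul_prod t,
        Finset.prod_eq_one (fun i (hi : i ∈ t) => by simp [c, hi]), mul_one]
      exact Finset.prod_congr rfl fun i hi => by simp [c, Finset.mem_compl.mp hi]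
    rw [hcw, hsmul, hprod, hw, det_rowPW, mul_comm]
  have hnn : ∀ t : Finset (Fin m), t ∈ (Finset.univ : Finset (Finset (Fin m))) →
      0 ≤ (Matrix.of (t.piecewise u v)).det := by
    intro t _
    rw [hterm t]
    refine mul_nonneg (Finset.prod_nonneg fun i _ => ?_) (pmdet_pos hM _).le
    by_cases his : i ∈ s <;> simp [his]
    exact hd i his
  have hpos : 0 < (Matrix.of ((Finset.univ : Finset (Fin m)).piecewise u v)).det := by
    rw [hterm]
    simp only [Finset.compl_univ, Finset.prod_empty, one_mul, Finset.univ_inter]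
    exact pmdet_pos hM s
  exact lt_of_lt_of_le hpos (Finset.single_le_sum hnn (Finset.mem_univ _))

/-- Sign reversal property of P-matrices. -/
lemma sign_reversal {M : Matrix (Fin m) (Fin m) ℝ} (hM : IsPMatrix M)
    {x : Fin m → ℝ} (h : ∀ i, x i * M.mulVec x i ≤ 0) : x = 0 := by
  classical
  set s : Finset (Fin m) := Finset.univ.filter (fun i => x i ≠ 0) with hs
  set d : Fin m → ℝ := fun i => -(M.mulVec x i) / x i with hd
  have hd0 : ∀ i ∈ s, 0 ≤ d i := by
    intro i hi
    have hxi : x i ≠ 0 := by simpa [s] using hi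
    have := h i
    rcases lt_or_gt_of_ne hxi with hneg | hpos
    · have hMx : 0 ≤ M.mulVec x i := nonneg_of_mul_nonpos_right this hneg
      exact div_nonneg_iff.mpr (Or.inr ⟨by linarith, hneg.le⟩)
    · have hMx : M.mulVec x i ≤ 0 := nonpos_of_mul_nonpos_right this hpos
      exact div_nonneg (by linarith) hpos.le
  set N : Matrix (Fin m) (Fin m) ℝ :=
    Matrix.of (s.piecewise (fun i => M i + Pi.single i (d i))
      (fun i => Pi.single i (1:ℝ))) with hN
  have hdet : 0 < N.det := det_pw_add_pos hM s hd0
  have hNx : N.mulVec x = 0 := by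
    funext i
    by_cases hi : i ∈ s
    · have hxi : x i ≠ 0 := by simpa [s] using hi
      have : N.mulVec x i = M.mulVec x i + d i * x i := by
        simp [N, Matrix.mulVec, dotProduct,
          Finset.piecewise_eq_of_mem _ _ _ hi, add_mul, mul_add, Finset.sum_add_distrib,
          Pi.single_apply, ite_mul, mul_ite, zero_mul, mul_zero, Finset.sum_ite_eq,
          Finset.sum_ite_eq', mul_comm]
      rw [this, hd]
      field_simp
      simp
    · have hxi : x i = 0 := by simpa [s] using hi
      have : N.mulVec x i = x i := by
        simp [N, Matrix.mulVec, dotProduct,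
          Finset.piecewise_eq_of_notMem _ _ _ hi, Pi.single_apply, Finset.sum_ite_eq']
      rw [this, hxi]; rfl
  exact Matrix.eq_zero_of_mulVec_eq_zero hdet.ne' hNx

def Sol {m : ℕ} (M : Matrix (Fin m) (Fin m) ℝ) (b : Fin m → ℝ) (x : Fin m → ℝ) : Prop :=
  (∀ i, 0 ≤ x i) ∧ ∀ i, (0 < x i ∧ M.mulVec x i = b i) ∨ (x i = 0 ∧ b i ≤ M.mulVec x i)

lemma Sol_iff {M : Matrix (Fin m) (Fin m) ℝ} {b x : Fin m → ℝ} :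
    Sol M b x ↔ (∀ i, 0 ≤ x i) ∧ (∀ i, b i ≤ M.mulVec x i) ∧
      (∀ i, x i * (M.mulVec x i - b i) = 0) := by
  constructor
  · rintro ⟨hx, hc⟩
    refine ⟨hx, fun i => ?_, fun i => ?_⟩
    · rcases hc i with ⟨_, h⟩ | ⟨_, h⟩ <;> [exact h.ge; exact h]
    · rcases hc i with ⟨_, h⟩ | ⟨h, _⟩ <;> simp [h]
  · rintro ⟨hx, hge, hcomp⟩
    refine ⟨hx, fun i => ?_⟩
    rcases eq_or_lt_of_le (hx i) with h0 | h0
    · exact Or.inr ⟨h0.symm, hge i⟩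
    · left
      refine ⟨h0, ?_⟩
      have := hcomp i
      rcases mul_eq_zero.mp this with h | h
      · exact absurd h h0.ne'
      · linarith

lemma Sol_unique {M : Matrix (Fin m) (Fin m) ℝ} (hM : IsPMatrix M) {b x y : Fin m → ℝ}
    (hx : Sol M b x) (hy : Sol M b y) : x = y := by
  have key : ∀ i, (x - y) i * (M.mulVec (x - y)) i ≤ 0 := by
    intro i
    rw [Matrix.mulVec_sub]
    rcases lt_trichotomy (x i) (y i) with h | h | h
    · have hyi : 0 < y i := lt_of_le_of_lt (hx.1 i) h
      have h1 : M.mulVec y i = b i := ((hy.2 i).resolve_right (fun c => hyi.ne' c.1)).2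
      have h2 : b i ≤ M.mulVec x i := by
        rcases hx.2 i with ⟨_, h'⟩ | ⟨_, h'⟩ <;> [exact h'.ge; exact h']
      have : 0 ≤ (M.mulVec x - M.mulVec y) i := by simp [h1]; linarith
      have hxy : (x - y) i ≤ 0 := by simp [h.le]
      exact mul_nonpos_of_nonpos_of_nonneg hxy this
    · simp [h]
    · have hxi : 0 < x i := lt_of_le_of_lt (hy.1 i) h
      have h1 : M.mulVec x i = b i := ((hx.2 i).resolve_right (fun c => hxi.ne' c.1)).2
      have h2 : b i ≤ M.mulVec y i := by
        rcases hy.2 i with ⟨_, h'⟩ | ⟨_, h'⟩ <;> [exact h'.ge; exact h']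
      have hle : (M.mulVec x - M.mulVec y) i ≤ 0 := by simp [h1]; linarith
      have hxy : 0 ≤ (x - y) i := by simp [h.le]
      exact mul_nonpos_of_nonneg_of_nonpos hxy hle
  have := sign_reversal hM key
  have h0 : x - y = 0 := this
  funext i
  have := congrFun h0 i
  simpa [sub_eq_zero] using this

lemma tendsto_coord {p : ℕ} {u : ℕ → Fin p → ℝ} {L : Fin p → ℝ}
    (h : Filter.Tendsto u Filter.atTop (nhds L)) (i : Fin p) :
    Filter.Tendsto (fun k => u k i) Filter.atTop (nhds (L i)) :=
  ((continuous_apply i).tendsto L).comp h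

lemma tendsto_mulVec_coord {p : ℕ} {A : Matrix (Fin p) (Fin p) ℝ} {u : ℕ → Fin p → ℝ}
    {L : Fin p → ℝ} (h : Filter.Tendsto u Filter.atTop (nhds L)) (i : Fin p) :
    Filter.Tendsto (fun k => A.mulVec (u k) i) Filter.atTop (nhds (A.mulVec L i)) := by
  have hc : Continuous fun v : Fin p → ℝ => A.mulVec v := by
    have := LinearMap.continuous_of_finiteDimensional (Matrix.mulVecLin A)
    exact this
  exact (((continuous_apply i).comp hc).tendsto L).comp h

lemma no_big_solutions {p : ℕ} {M₀ : Matrix (Fin p) (Fin p) ℝ} (hM₀ : IsPMatrix M₀)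
    {x : ℕ → Fin p → ℝ} {q : ℕ → Fin p → ℝ} {B : ℝ}
    (hqB : ∀ k i, |q k i| ≤ B)
    (hcomp : ∀ k i, x k i * (M₀.mulVec (x k) i - q k i) ≤ 0)
    (hnorm : ∀ k : ℕ, (k : ℝ) ≤ ‖x k‖) : False := by
  classical
  set z : ℕ → Fin p → ℝ := fun k => ‖x (k+1)‖⁻¹ • x (k+1) with hz
  have hxpos : ∀ k, 0 < ‖x (k+1)‖ := fun k =>
    lt_of_lt_of_le (by positivity) (hnorm (k+1))
  have hz1 : ∀ k, ‖z k‖ = 1 := by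
    intro k
    rw [hz]
    simp only [norm_smul, norm_inv, norm_norm]
    exact inv_mul_cancel₀ (hxpos k).ne'
  have hzball : ∀ k, z k ∈ Metric.closedBall (0 : Fin p → ℝ) 1 := by
    intro k; simp [Metric.mem_closedBall, dist_zero_right, (hz1 k).le]
  obtain ⟨y, -, φ, hφ, hyz⟩ :=
    tendsto_subseq_of_bounded Metric.isBounded_closedBall hzball
  have hy1 : ‖y‖ = 1 := by
    have : Filter.Tendsto (fun k => ‖z (φ k)‖) Filter.atTop (nhds ‖y‖) :=
      (continuous_norm.tendsto y).comp hyz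
    have h2 : Filter.Tendsto (fun _ : ℕ => (1:ℝ)) Filter.atTop (nhds ‖y‖) := by
      simpa [hz1] using this
    exact (tendsto_nhds_unique tendsto_const_nhds h2).symm
  have hsign : ∀ i, y i * M₀.mulVec y i ≤ 0 := by
    intro i
    have hB0 : 0 ≤ B := le_trans (abs_nonneg _) (hqB 0 i)
    have hqlim : Filter.Tendsto (fun k => q (φ k + 1) i / ‖x (φ k + 1)‖)
        Filter.atTop (nhds 0) := by
      have hbnd : ∀ k : ℕ, ‖q (φ k + 1) i / ‖x (φ k + 1)‖‖ ≤ B / ((k:ℝ) + 1) := by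
        intro k
        have h1 : (k : ℝ) + 1 ≤ ‖x (φ k + 1)‖ := by
          have ha := hnorm (φ k + 1)
          have hb : (k:ℝ) ≤ (φ k : ℝ) := by exact_mod_cast hφ.le_apply
          push_cast at ha
          linarith
        have hpos : (0:ℝ) < (k:ℝ) + 1 := by positivity
        rw [Real.norm_eq_abs, abs_div, abs_of_nonneg (norm_nonneg _)]
        exact div_le_div₀ hB0 (hqB _ i) hpos h1
      have hlim : Filter.Tendsto (fun k : ℕ => B / ((k:ℝ) + 1)) Filter.atTop (nhds 0) := by
        apply Filter.Tendsto.div_atTop tendsto_const_nhds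
        exact Filter.tendsto_atTop_add_const_right _ 1 tendsto_natCast_atTop_atTop
      exact squeeze_zero_norm hbnd hlim
    have hterm : Filter.Tendsto
        (fun k => z (φ k) i * (M₀.mulVec (z (φ k)) i - q (φ k + 1) i / ‖x (φ k + 1)‖))
        Filter.atTop (nhds (y i * (M₀.mulVec y i - 0))) :=
      ((tendsto_coord hyz i).mul ((tendsto_mulVec_coord hyz i).sub hqlim))
    have hle : ∀ k, z (φ k) i * (M₀.mulVec (z (φ k)) i - q (φ k + 1) i / ‖x (φ k + 1)‖) ≤ 0 := by
      intro k
      set K := φ k + 1 with hK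
      have hinv : 0 < ‖x K‖⁻¹ := inv_pos.mpr (hxpos (φ k))
      have hzi : z (φ k) i = ‖x K‖⁻¹ * x K i := rfl
      rw [hzi]
      have hmv : M₀.mulVec (z (φ k)) i = ‖x K‖⁻¹ * M₀.mulVec (x K) i := by
        rw [hz]
        simp [Matrix.mulVec_smul, smul_eq_mul]
        rfl
      rw [hmv]
      have hKc := hcomp K i
      have hne : ‖x K‖ ≠ 0 := (hxpos (φ k)).ne'
      have : ‖x K‖⁻¹ * x K i * (‖x K‖⁻¹ * M₀.mulVec (x K) i - q K i / ‖x K‖)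
          = ‖x K‖⁻¹ * ‖x K‖⁻¹ * (x K i * (M₀.mulVec (x K) i - q K i)) := by
        rw [div_eq_mul_inv]
        ring
      rw [this]
      exact mul_nonpos_of_nonneg_of_nonpos (by positivity) hKc
    have := le_of_tendsto hterm (Filter.Eventually.of_forall hle)
    simpa using this
  have h0 := sign_reversal hM₀ hsign
  rw [h0] at hy1
  simp at hy1

lemma isPMatrix_castSucc {n : ℕ} {M : Matrix (Fin (n+1)) (Fin (n+1)) ℝ} (hM : IsPMatrix M) :
    IsPMatrix (M.submatrix Fin.castSucc Fin.castSucc) := by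
  intro S hS
  classical
  set S' : Finset (Fin (n+1)) := S.image Fin.castSucc with hS'
  have hpos := hM S' (hS.image _)
  have hinj : Function.Injective (Fin.castSucc : Fin n → Fin (n+1)) := Fin.castSucc_injective n
  let f : {y // y ∈ S} → {y // y ∈ S'} := fun i =>
    ⟨Fin.castSucc i, Finset.mem_image_of_mem _ i.2⟩
  have hbij : Function.Bijective f := by
    constructor
    · intro a b hab
      exact Subtype.ext (hinj (congrArg Subtype.val hab))
    · rintro ⟨j, hj⟩
      rcases Finset.mem_image.mp hj with ⟨i, hi, rfl⟩
      exact ⟨⟨i, hi⟩, rfl⟩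
  have heq : ((M.submatrix Fin.castSucc Fin.castSucc).submatrix
        (fun i : {y // y ∈ S} => (i : Fin n)) (fun j : {y // y ∈ S} => (j : Fin n)))
      = (M.submatrix (fun i : {y // y ∈ S'} => (i : Fin (n+1)))
          (fun j : {y // y ∈ S'} => (j : Fin (n+1)))).submatrix
          (Equiv.ofBijective f hbij) (Equiv.ofBijective f hbij) := by
    ext i j; rfl
  rw [heq, Matrix.det_submatrix_equiv_self]
  exact hpos

lemma Sol_exists : ∀ (p : ℕ) (M : Matrix (Fin p) (Fin p) ℝ), IsPMatrix M →
    ∀ b : Fin p → ℝ, ∃ x, Sol M b x := by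
  intro p
  induction p with
  | zero =>
    intro M _ b
    exact ⟨0, fun i => i.elim0, fun i => i.elim0⟩
  | succ n ih =>
    intro M hM b
    classical
    set M' : Matrix (Fin n) (Fin n) ℝ := M.submatrix Fin.castSucc Fin.castSucc with hM'def
    have hM' : IsPMatrix M' := isPMatrix_castSucc hM
    set q : ℝ → Fin n → ℝ :=
      fun t i => b (Fin.castSucc i) - t * M (Fin.castSucc i) (Fin.last n) with hqdef
    have hsol : ∀ t : ℝ, ∃ x, Sol M' (q t) x := fun t => ih M' hM' (q t)
    choose xt hxt using hsol
    set X : ℝ → Fin (n+1) → ℝ := fun t => Fin.snoc (xt t) t with hXdef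
    have hXcsval : ∀ (t : ℝ) (i : Fin n), X t (Fin.castSucc i) = xt t i := by
      intro t i; simp [X, Fin.snoc_castSucc]
    have hXlastval : ∀ t : ℝ, X t (Fin.last n) = t := by
      intro t; simp [X, Fin.snoc_last]
    have hmulcs : ∀ (t : ℝ) (i : Fin n),
        M.mulVec (X t) (Fin.castSucc i)
          = M'.mulVec (xt t) i + t * M (Fin.castSucc i) (Fin.last n) := by
      intro t i
      rw [Matrix.mulVec, dotProduct, Fin.sum_univ_castSucc]
      congr 1
      · rw [Matrix.mulVec, dotProduct]
        exact Finset.sum_congr rfl fun l _ => by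
          simp [X, M', Fin.snoc_castSucc, Matrix.submatrix_apply]
      · simp [X, Fin.snoc_last, mul_comm]
    have hmull : ∀ t : ℝ,
        M.mulVec (X t) (Fin.last n)
          = (∑ i, M (Fin.last n) (Fin.castSucc i) * xt t i)
            + M (Fin.last n) (Fin.last n) * t := by
      intro t
      rw [Matrix.mulVec, dotProduct, Fin.sum_univ_castSucc]
      simp [X, Fin.snoc_castSucc, Fin.snoc_last]
    set g : ℝ → ℝ := fun t =>
      (∑ i, M (Fin.last n) (Fin.castSucc i) * xt t i)
        + M (Fin.last n) (Fin.last n) * t - b (Fin.last n) with hgdef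
    have hgval : ∀ t : ℝ, g t = M.mulVec (X t) (Fin.last n) - b (Fin.last n) := by
      intro t; rw [hmull]
    -- conditions at castSucc indices hold for every t ≥ 0
    have hXcs : ∀ (t : ℝ) (i : Fin n),
        (0 < X t (Fin.castSucc i)
            ∧ M.mulVec (X t) (Fin.castSucc i) = b (Fin.castSucc i)) ∨
        (X t (Fin.castSucc i) = 0
            ∧ b (Fin.castSucc i) ≤ M.mulVec (X t) (Fin.castSucc i)) := by
      intro t i
      rcases (hxt t).2 i with ⟨h1, h2⟩ | ⟨h1, h2⟩
      · left
        refine ⟨by rwa [hXcsval], ?_⟩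
        rw [hmulcs t i, h2]
        simp [q]
      · right
        refine ⟨by rwa [hXcsval], ?_⟩
        rw [hmulcs t i]
        have := h2
        simp only [q] at this
        linarith
    -- uniform boundedness of the parametric solutions
    have hbound : ∀ C : ℝ, ∃ R : ℝ, ∀ t : ℝ, |t| ≤ C → ‖xt t‖ ≤ R := by
      intro C
      by_contra hcon
      push_neg at hcon
      choose ts hts1 hts2 using fun k : ℕ => hcon (k : ℝ)
      set B : ℝ := ‖fun i : Fin n => b (Fin.castSucc i)‖
        + C * ‖fun i : Fin n => M (Fin.castSucc i) (Fin.last n)‖ with hB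
      refine no_big_solutions hM' (x := fun k => xt (ts k)) (q := fun k => q (ts k))
        (B := B) ?_ ?_ ?_
      · intro k i
        have h1 : |b (Fin.castSucc i)| ≤ ‖fun i : Fin n => b (Fin.castSucc i)‖ := by
          simpa [Real.norm_eq_abs] using
            norm_le_pi_norm (fun i : Fin n => b (Fin.castSucc i)) i
        have h2 : |M (Fin.castSucc i) (Fin.last n)|
            ≤ ‖fun i : Fin n => M (Fin.castSucc i) (Fin.last n)‖ := by
          simpa [Real.norm_eq_abs] using
            norm_le_pi_norm (fun i : Fin n => M (Fin.castSucc i) (Fin.last n)) i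
        have h3 : |ts k * M (Fin.castSucc i) (Fin.last n)| ≤ C * ‖fun i : Fin n => M (Fin.castSucc i) (Fin.last n)‖ := by
          rw [abs_mul]
          exact mul_le_mul (hts1 k) h2 (abs_nonneg _) ((abs_nonneg _).trans (hts1 k))
        calc |q (ts k) i| ≤ |b (Fin.castSucc i)| + |ts k * M (Fin.castSucc i) (Fin.last n)| := by
              simpa [q] using abs_sub (b (Fin.castSucc i)) (ts k * M (Fin.castSucc i) (Fin.last n))
          _ ≤ B := by rw [hB]; exact add_le_add h1 h3
      · intro k i
        have := (Sol_iff.mp (hxt (ts k))).2.2 i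
        exact le_of_eq this
      · intro k
        exact (hts2 k).le
    -- sequential continuity of the parametric solution map
    have hcont : Continuous xt := by
      rw [continuous_iff_seqContinuous]
      intro u t₀ hu
      apply Filter.tendsto_of_subseq_tendsto
      intro ns hns
      have hbd : ∃ C : ℝ, ∀ k : ℕ, |u k| ≤ C := by
        have h1 : BddAbove (Set.range u) := hu.bddAbove_range
        have h2 : BddBelow (Set.range u) := hu.bddBelow_range
        obtain ⟨c1, hc1⟩ := h1
        obtain ⟨c2, hc2⟩ := h2
        refine ⟨max c1 (-c2), fun k => ?_⟩
        rw [abs_le]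
        constructor
        · have h := hc2 (Set.mem_range_self k)
          have h3 := le_max_right c1 (-c2)
          linarith
        · exact le_trans (hc1 (Set.mem_range_self k)) (le_max_left _ _)
      obtain ⟨C, hC⟩ := hbd
      obtain ⟨R, hR⟩ := hbound C
      have hball : ∀ k, xt (u (ns k)) ∈ Metric.closedBall (0 : Fin n → ℝ) (max R 0) := by
        intro k
        simp only [Metric.mem_closedBall, dist_zero_right]
        exact le_trans (hR _ (hC _)) (le_max_left _ _)
      obtain ⟨L, -, ms, hms, hLlim⟩ :=
        tendsto_subseq_of_bounded Metric.isBounded_closedBall hball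
      have htpar : Filter.Tendsto (fun k => u (ns (ms k))) Filter.atTop (nhds t₀) :=
        hu.comp (hns.comp hms.tendsto_atTop)
      -- L solves the limiting LCP
      have hLsol : Sol M' (q t₀) L := by
        rw [Sol_iff]
        refine ⟨fun i => ?_, fun i => ?_, fun i => ?_⟩
        · exact ge_of_tendsto (tendsto_coord hLlim i)
            (Filter.Eventually.of_forall fun k => (hxt _).1 i)
        · have hqlim : Filter.Tendsto (fun k => q (u (ns (ms k))) i)
              Filter.atTop (nhds (q t₀ i)) := by
            simp only [q]
            exact Filter.Tendsto.sub tendsto_const_nhds (htpar.mul tendsto_const_nhds)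
          exact le_of_tendsto_of_tendsto hqlim (tendsto_mulVec_coord hLlim i)
            (Filter.Eventually.of_forall fun k => (Sol_iff.mp (hxt _)).2.1 i)
        · have h1 : Filter.Tendsto
              (fun k => xt (u (ns (ms k))) i
                * (M'.mulVec (xt (u (ns (ms k)))) i - q (u (ns (ms k))) i))
              Filter.atTop (nhds (L i * (M'.mulVec L i - q t₀ i))) := by
            refine (tendsto_coord hLlim i).mul
              ((tendsto_mulVec_coord hLlim i).sub ?_)
            simp only [q]
            exact Filter.Tendsto.sub tendsto_const_nhds (htpar.mul tendsto_const_nhds)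
          have h2 : ∀ k : ℕ, xt (u (ns (ms k))) i
              * (M'.mulVec (xt (u (ns (ms k)))) i - q (u (ns (ms k))) i) = 0 :=
            fun k => (Sol_iff.mp (hxt _)).2.2 i
          have h3 : Filter.Tendsto (fun _ : ℕ => (0:ℝ)) Filter.atTop
              (nhds (L i * (M'.mulVec L i - q t₀ i))) := by
            simpa [h2] using h1
          exact (tendsto_nhds_unique tendsto_const_nhds h3).symm
      have hLeq : L = xt t₀ := Sol_unique hM' hLsol (hxt t₀)
      exact ⟨ms, by rw [← hLeq]; exact hLlim⟩
    have hgc : Continuous g := by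
      apply Continuous.sub ?_ continuous_const
      apply Continuous.add ?_ (continuous_const.mul continuous_id)
      apply continuous_finset_sum
      intro i _
      exact continuous_const.mul ((continuous_apply i).comp hcont)
    -- asymptotics: g is eventually nonnegative somewhere
    have hasym : ∃ T : ℝ, 0 ≤ T ∧ 0 ≤ g T := by
      by_contra hcon
      push_neg at hcon
      refine no_big_solutions hM (x := fun k : ℕ => X (k : ℝ)) (q := fun _ => b)
        (B := ‖b‖) ?_ ?_ ?_
      · intro k i
        beta_reduce
        simpa [Real.norm_eq_abs] using norm_le_pi_norm b i
      · intro k i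
        beta_reduce
        induction i using Fin.lastCases with
        | last =>
          have h1 : X (k:ℝ) (Fin.last n) = (k:ℝ) := hXlastval _
          have h2 : M.mulVec (X (k:ℝ)) (Fin.last n) - b (Fin.last n) < 0 := by
            have := hcon (k:ℝ) (by positivity)
            rw [hgval] at this
            linarith
          exact mul_nonpos_of_nonneg_of_nonpos (by rw [h1]; positivity) h2.le
        | cast i =>
          rcases hXcs (k:ℝ) i with ⟨h1, h2⟩ | ⟨h1, h2⟩
          · rw [h2]; simp
          · rw [h1]; simp
      · intro k
        beta_reduce
        have h1 : |X (k:ℝ) (Fin.last n)| ≤ ‖X (k:ℝ)‖ := by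
          simpa [Real.norm_eq_abs] using norm_le_pi_norm (X (k:ℝ)) (Fin.last n)
        rw [hXlastval] at h1
        calc (k:ℝ) ≤ |(k:ℝ)| := le_abs_self _
          _ ≤ ‖X (k:ℝ)‖ := h1
    -- nonnegativity of the candidate solutions
    have hXnn : ∀ t : ℝ, 0 ≤ t → ∀ i, 0 ≤ X t i := by
      intro t ht i
      induction i using Fin.lastCases with
      | last => rw [hXlastval]; exact ht
      | cast i => rw [hXcsval]; exact (hxt t).1 i
    -- conclude
    by_cases hg0 : 0 ≤ g 0
    · refine ⟨X 0, hXnn 0 le_rfl, fun i => ?_⟩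
      induction i using Fin.lastCases with
      | last =>
        right
        refine ⟨hXlastval 0, ?_⟩
        rw [hgval] at hg0
        linarith
      | cast i => exact hXcs 0 i
    · push_neg at hg0
      obtain ⟨T, hT0, hgT⟩ := hasym
      have hsub : Set.Icc (g 0) (g T) ⊆ g '' Set.Icc 0 T :=
        intermediate_value_Icc hT0 hgc.continuousOn
      obtain ⟨t₀, ht₀mem, hgt₀⟩ := hsub ⟨hg0.le, hgT⟩
      have ht₀pos : 0 < t₀ := by
        rcases eq_or_lt_of_le ht₀mem.1 with h | h
        · exfalso; rw [← h] at hgt₀; linarith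
        · exact h
      refine ⟨X t₀, hXnn t₀ ht₀pos.le, fun i => ?_⟩
      induction i using Fin.lastCases with
      | last =>
        left
        refine ⟨by rw [hXlastval]; exact ht₀pos, ?_⟩
        rw [hgval] at hgt₀
        linarith
      | cast i => exact hXcs t₀ i


end Aux

theorem statement19 (n : ℕ) (M : Matrix (Fin n) (Fin n) ℝ)
    (hM : IsPMatrix M) (b : Fin n → ℝ)
    (d e : Fin n → ℝ) (hd : ∀ i, 0 < d i) (he : ∀ i, 0 < e i) :
    (∃! xs : Fin n → ℝ, (∀ i, 0 ≤ xs i) ∧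
      ∀ i, (0 < xs i ∧ M.mulVec xs i = b i) ∨
           (xs i = 0 ∧ b i ≤ M.mulVec xs i)) ∧
    (∃! z : (Fin n → ℝ) × (Fin n → ℝ),
      (∀ i, 0 ≤ z.1 i) ∧ (∀ i, z.2 i = d i / e i * z.1 i) ∧
      ∀ i, (0 < z.1 i ∧ M.mulVec z.1 i = b i) ∨
           (z.1 i = 0 ∧ b i ≤ M.mulVec z.1 i)) := by
  obtain ⟨x, hx⟩ := Sol_exists n M hM b
  constructor
  · exact ⟨x, hx, fun y hy => Sol_unique hM hy hx⟩
  · refine ⟨(x, fun i => d i / e i * x i), ⟨hx.1, fun i => rfl, hx.2⟩, ?_⟩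
    rintro ⟨z1, z2⟩ ⟨h1, h2, h3⟩
    have hz1 : z1 = x := Sol_unique hM ⟨h1, h3⟩ hx
    subst hz1
    exact Prod.ext rfl (funext fun i => h2 i)

end
end
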